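/- For every n ≥ 2 there exists ε₀ > 0 such that for all ε ∈ (0, ε₀) the following holds for the small/medium/big tournament with parameter ε on N = 2^{n+1} players (with arbitrary entries within each of the three groups): a draw σ maximizes wp(1,P,σ) over all draws if and only if the half of the draw containing player 1 consists exactly of player 1 together with all the small players, and in the other half every first-round match pairs a medium player with a big player. -/

import Mathlib

/-- A perfect (balanced) binary tree of depth `n` with leaves labelled by `α`. -/
inductive BT (α : Type) : ℕ → Type
  | leaf : α → BT α 0
  | node {n : ℕ} : BT α n → BT α n → BT α (n + 1)

namespace BT

/-- The list of leaf labels, from left to right. -/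
def leaves {α : Type} : ∀ {n : ℕ}, BT α n → List α
  | _, .leaf a => [a]
  | _, .node L R => L.leaves ++ R.leaves

/-- Relabel the leaves of a tree. -/
def map {α β : Type} (f : α → β) : ∀ {n : ℕ}, BT α n → BT β n
  | _, .leaf a => .leaf (f a)
  | _, .node L R => .node (L.map f) (R.map f)

end BT

/-- Two trees represent the same draw iff one can be obtained from the other by
swapping the two children subtrees at internal nodes. -/
def BTequiv {α : Type} : ∀ {n : ℕ}, BT α n → BT α n → Prop
  | 0, .leaf a, .leaf b => a = b
  | _ + 1, .node L R, .node L' R' =>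
      (BTequiv L L' ∧ BTequiv R R') ∨ (BTequiv L R' ∧ BTequiv R L')

/-- A draw: each of the `N` players occurs exactly once among the leaves. -/
def IsDraw {N n : ℕ} (t : BT (Fin N) n) : Prop :=
  ∀ i : Fin N, t.leaves.count i = 1

/-- The winning distribution of a knockout tournament: `wd P t i` is the probability
that player `i` wins the (sub)tournament with draw `t` and comparison matrix `P`. -/
noncomputable def wd {N : ℕ} (P : Fin N → Fin N → ℝ) :
    ∀ {n : ℕ}, BT (Fin N) n → Fin N → ℝ
  | _, .leaf j => fun i => if i = j then 1 else 0
  | _, .node L R => fun i =>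
      wd P L i * (∑ j, wd P R j * P i j) + wd P R i * (∑ j, wd P L j * P i j)

/-- `P` is a comparison matrix. -/
def IsCompMatrix {N : ℕ} (P : Fin N → Fin N → ℝ) : Prop :=
  ∀ i j : Fin N, i ≠ j → 0 ≤ P i j ∧ P i j ≤ 1 ∧ P i j + P j i = 1

/-- `P` is deterministic: every off-diagonal entry is 0 or 1. -/
def IsDet {N : ℕ} (P : Fin N → Fin N → ℝ) : Prop :=
  ∀ i j : Fin N, i ≠ j → P i j = 0 ∨ P i j = 1

/-- The set `𝒫(P,ε)` of ε-perturbations of `P`. -/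
def perturbs {N : ℕ} (P : Fin N → Fin N → ℝ) (ε : ℝ) : Set (Fin N → Fin N → ℝ) :=
  {P' | IsCompMatrix P' ∧ ∀ i j : Fin N, i ≠ j → |P' i j - P i j| ≤ ε}

/-- The ε-guaranteed winning probability `wp_ε(i,P,σ)`. -/
noncomputable def wpe {N n : ℕ} (i : Fin N) (P : Fin N → Fin N → ℝ) (ε : ℝ)
    (t : BT (Fin N) n) : ℝ :=
  sInf ((fun P' => wd P' t i) '' perturbs P ε)

/-- The comparison matrix of the hard `n`-round tournament `H_n` (players 0-indexed):
for `i < j`, player `i` beats player `j` iff `i = j - 2 ^ v` where `2 ^ v` is the largest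
power of 2 dividing `j` (in 0-indexed numbering). -/
noncomputable def hardP (n : ℕ) : Fin (2 ^ n) → Fin (2 ^ n) → ℝ := fun i j =>
  if i = j then 0
  else if (i : ℕ) < (j : ℕ) then
    (if (i : ℕ) + 2 ^ padicValNat 2 (j : ℕ) = (j : ℕ) then 1 else 0)
  else
    (if (j : ℕ) + 2 ^ padicValNat 2 (i : ℕ) = (i : ℕ) then 0 else 1)

/-- The tree of depth `n` whose leaves are `s, s+1, …, s + 2^n - 1` from left to right. -/
def ordTree : (n : ℕ) → ℕ → BT ℕ n
  | 0, s => .leaf s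
  | n + 1, s => .node (ordTree n s) (ordTree n (s + 2 ^ n))

/-- The identity draw, placing players `0, 1, …, 2^n - 1` on the leaves in order. -/
def idDraw (n : ℕ) : BT (Fin (2 ^ n)) n :=
  (ordTree n 0).map (fun k => ⟨k % 2 ^ n, Nat.mod_lt _ (by positivity)⟩)

/-- `f_p(x,y) = p(x+y) + (1-2p)xy`. -/
def fp (p x y : ℝ) : ℝ := p * (x + y) + (1 - 2 * p) * x * y

/-- `B_p` on trees with real leaf labels. -/
noncomputable def Bp (p : ℝ) : ∀ {n : ℕ}, BT ℝ n → ℝ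
  | _, .leaf x => x
  | _, .node L R => fp p (Bp p L) (Bp p R)

/-- Group a list into consecutive pairs. -/
def pairList {α : Type} : List α → List (α × α)
  | a :: b :: rest => (a, b) :: pairList rest
  | _ => []

/-- The first-round matches of a draw: the consecutive sibling pairs of leaves. -/
def firstPairs {α : Type} {n : ℕ} (t : BT α n) : List (α × α) := pairList t.leaves

/-- A draw is mixed (w.r.t. the set `B` of big players) if every first-round match
pairs a big player with a small player. -/
def MixedDraw {N n : ℕ} (B : Finset (Fin N)) (t : BT (Fin N) n) : Prop :=
  ∀ q ∈ firstPairs t, ((q.1 ∈ B) ↔ q.2 ∉ B)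

/-- Number of leaves labelled `1`. -/
noncomputable def ones {n : ℕ} (t : BT ℝ n) : ℕ := t.leaves.count 1

/-- All leaf labels are `0` or `1`. -/
def ZeroOne {n : ℕ} (t : BT ℝ n) : Prop := ∀ x ∈ t.leaves, x = 0 ∨ x = 1

/-- `P[kl←t]`: the matrix agreeing with `P` except `P k l = t` and `P l k = 1 - t`. -/
def updPair {N : ℕ} (P : Fin N → Fin N → ℝ) (k l : Fin N) (t : ℝ) :
    Fin N → Fin N → ℝ :=
  fun i j => if i = k ∧ j = l then t else if i = l ∧ j = k then 1 - t else P i j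

/-- Perturb a deterministic matrix: for each pair `(w, l) ∈ S` (winner first),
set `P w l = 1 - ε` and `P l w = ε`; other entries unchanged. -/
def detPerturb {N : ℕ} (P : Fin N → Fin N → ℝ) (S : Finset (Fin N × Fin N)) (ε : ℝ) :
    Fin N → Fin N → ℝ :=
  fun i j => if (i, j) ∈ S then 1 - ε else if (j, i) ∈ S then ε else P i j

/-- Swap the result of the single match between `a` and `b`. -/
def swapPair {N : ℕ} (P : Fin N → Fin N → ℝ) (a b : Fin N) : Fin N → Fin N → ℝ :=
  fun i j => if i = a ∧ j = b then P b a else if i = b ∧ j = a then P a b else P i j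

/-- The pair `(a,b)` (with `a` the winner) is crucial for `i` in `C(P,σ)`. -/
def Crucial {N n : ℕ} (P : Fin N → Fin N → ℝ) (σ : BT (Fin N) n) (i : Fin N)
    (a b : Fin N) : Prop :=
  a ≠ b ∧ P a b = 1 ∧ wd (swapPair P a b) σ i = 0

/-- The small players of the small/medium/big tournament: players `2, …, 2^n`
(indices `1, …, 2^n - 1`). -/
def smalls (n : ℕ) : Finset (Fin (2 ^ (n + 1))) :=
  Finset.univ.filter (fun i => 1 ≤ (i : ℕ) ∧ (i : ℕ) < 2 ^ n)

/-- The medium players: players `2^n + 1, …, 2^n + 2^(n-1)` (indices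
`2^n, …, 2^n + 2^(n-1) - 1`). -/
def mediums (n : ℕ) : Finset (Fin (2 ^ (n + 1))) :=
  Finset.univ.filter (fun i => 2 ^ n ≤ (i : ℕ) ∧ (i : ℕ) < 2 ^ n + 2 ^ (n - 1))

/-- The big players: players `2^n + 2^(n-1) + 1, …, 2^(n+1)`. -/
def bigs (n : ℕ) : Finset (Fin (2 ^ (n + 1))) :=
  Finset.univ.filter (fun i => 2 ^ n + 2 ^ (n - 1) ≤ (i : ℕ))

/-- The comparison-matrix constraints of the small/medium/big tournament with
parameter `ε`; entries within each group are arbitrary. -/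
def SMBMatrix (n : ℕ) (ε : ℝ) (P : Fin (2 ^ (n + 1)) → Fin (2 ^ (n + 1)) → ℝ) : Prop :=
  IsCompMatrix P ∧
  (∀ s ∈ smalls n, P ⟨0, by positivity⟩ s = 1) ∧
  (∀ m ∈ mediums n, P ⟨0, by positivity⟩ m = 0.4) ∧
  (∀ b ∈ bigs n, P ⟨0, by positivity⟩ b = 0.6) ∧
  (∀ s ∈ smalls n, ∀ m ∈ mediums n, P s m = 0) ∧
  (∀ s ∈ smalls n, ∀ b ∈ bigs n, P s b = 0) ∧
  (∀ m ∈ mediums n, ∀ b ∈ bigs n, P m b = 0.5 - ε / 2)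

/-- Every first-round match of `t` pairs a medium player with a big player. -/
def MBPaired (n : ℕ) {m : ℕ} (t : BT (Fin (2 ^ (n + 1))) m) : Prop :=
  ∀ q ∈ firstPairs t,
    (q.1 ∈ mediums n ∧ q.2 ∈ bigs n) ∨ (q.1 ∈ bigs n ∧ q.2 ∈ mediums n)

/-- The half of the draw containing player 1 consists exactly of player 1 together
with all the small players, and in the other half every first-round match pairs a
medium player with a big player. -/
def OptShape (n : ℕ) (σ : BT (Fin (2 ^ (n + 1))) (n + 1)) : Prop :=
  ∃ L R : BT (Fin (2 ^ (n + 1))) n, σ = BT.node L R ∧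
    (((L.leaves : Multiset (Fin (2 ^ (n + 1)))) =
        (insert ⟨0, by positivity⟩ (smalls n)).val ∧ MBPaired n R) ∨
     ((R.leaves : Multiset (Fin (2 ^ (n + 1)))) =
        (insert ⟨0, by positivity⟩ (smalls n)).val ∧ MBPaired n L))

namespace SMB

open Finset

lemma leaves_length {α : Type} : ∀ {m : ℕ} (t : BT α m), t.leaves.length = 2 ^ m
  | _, .leaf _ => rfl
  | _, .node L R => by
      rw [BT.leaves, List.length_append, leaves_length L, leaves_length R, pow_succ]
      ring

lemma wd_support {N : ℕ} (P : Fin N → Fin N → ℝ) :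
    ∀ {m : ℕ} (t : BT (Fin N) m) (i : Fin N), i ∉ t.leaves → wd P t i = 0
  | _, .leaf j, i, hi => by
      simp [BT.leaves] at hi
      simp [wd, hi]
  | _, .node L R, i, hi => by
      simp [BT.leaves] at hi
      simp [wd, wd_support P L i hi.1, wd_support P R i hi.2]

/-- disjointness of subtrees from nodup -/
lemma nodup_node {α : Type} {m : ℕ} {L R : BT α m}
    (h : (BT.node L R).leaves.Nodup) :
    L.leaves.Nodup ∧ R.leaves.Nodup ∧ ∀ a ∈ L.leaves, a ∉ R.leaves := by
  have := h
  rw [BT.leaves, List.nodup_append] at this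
  exact ⟨this.1, this.2.1, fun a ha h' => this.2.2 a ha a h' rfl⟩

lemma wd_nonneg {N : ℕ} {P : Fin N → Fin N → ℝ} (hP : IsCompMatrix P) :
    ∀ {m : ℕ} (t : BT (Fin N) m), t.leaves.Nodup → ∀ i, 0 ≤ wd P t i
  | _, .leaf j, _, i => by
      simp only [wd]; split <;> norm_num
  | _, .node L R, hnd, i => by
      obtain ⟨ndL, ndR, hdisj⟩ := nodup_node hnd
      have hL := wd_nonneg hP L ndL
      have hR := wd_nonneg hP R ndR
      simp only [wd]
      have key : ∀ {a b : ℕ} (A : BT (Fin N) a) (B : BT (Fin N) b),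
          (∀ j, 0 ≤ wd P A j) → (∀ j, 0 ≤ wd P B j) →
          (i ∈ A.leaves → i ∉ B.leaves) →
          0 ≤ wd P A i * ∑ j, wd P B j * P i j := by
        intro a b A B hA hB hmem
        by_cases hiA : i ∈ A.leaves
        · refine mul_nonneg (hA i) (Finset.sum_nonneg fun j _ => ?_)
          by_cases hji : j = i
          · subst hji; rw [wd_support P B j (hmem hiA)]; simp
          · exact mul_nonneg (hB j) (hP i j (Ne.symm hji)).1
        · rw [wd_support P A i hiA]; simp
      have h1 := key L R hL hR (fun h => hdisj i h)
      have h2 := key R L hR hL (fun h hc => hdisj i hc h)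
      linarith

lemma wd_sum_one {N : ℕ} {P : Fin N → Fin N → ℝ} (hP : IsCompMatrix P) :
    ∀ {m : ℕ} (t : BT (Fin N) m), t.leaves.Nodup → ∑ i, wd P t i = 1
  | _, .leaf j, _ => by simp [wd]
  | _, .node L R, hnd => by
      obtain ⟨ndL, ndR, hdisj⟩ := nodup_node hnd
      have hsL := wd_sum_one hP L ndL
      have hsR := wd_sum_one hP R ndR
      simp only [wd]
      rw [Finset.sum_add_distrib]
      have e1 : ∑ i, wd P L i * ∑ j, wd P R j * P i j
          = ∑ i, ∑ j, wd P L i * wd P R j * P i j := by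
        refine Finset.sum_congr rfl fun i _ => ?_
        rw [Finset.mul_sum]; ring_nf
      have e2 : ∑ i, wd P R i * ∑ j, wd P L j * P i j
          = ∑ i, ∑ j, wd P L j * wd P R i * P i j := by
        refine Finset.sum_congr rfl fun i _ => ?_
        rw [Finset.mul_sum]
        refine Finset.sum_congr rfl fun j _ => by ring
      rw [e1, e2, Finset.sum_comm (f := fun i j => wd P L j * wd P R i * P i j)]
      rw [← Finset.sum_add_distrib]
      have e3 : ∀ i ∈ (Finset.univ : Finset (Fin N)),
          (∑ j, wd P L i * wd P R j * P i j) + (∑ j, wd P L i * wd P R j * P j i)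
          = ∑ j, wd P L i * wd P R j := by
        intro i _
        rw [← Finset.sum_add_distrib]
        refine Finset.sum_congr rfl fun j _ => ?_
        rw [← mul_add]
        by_cases h0 : wd P L i * wd P R j = 0
        · rw [h0, zero_mul]
        · have hiL : i ∈ L.leaves := by
            by_contra hc; exact h0 (by rw [wd_support P L i hc]; ring)
          have hjR : j ∈ R.leaves := by
            by_contra hc; exact h0 (by rw [wd_support P R j hc]; ring)
          have hij : i ≠ j := fun h => (hdisj i hiL) (h ▸ hjR)
          rw [(hP i j hij).2.2, mul_one]
      rw [Finset.sum_congr rfl e3]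
      rw [← Finset.sum_mul_sum]
      rw [hsL, hsR]; norm_num

lemma wd_le_one {N : ℕ} {P : Fin N → Fin N → ℝ} (hP : IsCompMatrix P)
    {m : ℕ} (t : BT (Fin N) m) (hnd : t.leaves.Nodup) (i : Fin N) :
    wd P t i ≤ 1 := by
  rw [← wd_sum_one hP t hnd]
  exact Finset.single_le_sum (fun j _ => wd_nonneg hP t hnd j) (Finset.mem_univ i)

lemma wd_sum_subset_le_one {N : ℕ} {P : Fin N → Fin N → ℝ} (hP : IsCompMatrix P)
    {m : ℕ} (t : BT (Fin N) m) (hnd : t.leaves.Nodup) (S : Finset (Fin N)) :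
    ∑ i ∈ S, wd P t i ≤ 1 := by
  rw [← wd_sum_one hP t hnd]
  exact Finset.sum_le_sum_of_subset_of_nonneg (Finset.subset_univ S)
    (fun j _ _ => wd_nonneg hP t hnd j)

lemma wd_sum_subset_nonneg {N : ℕ} {P : Fin N → Fin N → ℝ} (hP : IsCompMatrix P)
    {m : ℕ} (t : BT (Fin N) m) (hnd : t.leaves.Nodup) (S : Finset (Fin N)) :
    0 ≤ ∑ i ∈ S, wd P t i :=
  Finset.sum_nonneg fun j _ => wd_nonneg hP t hnd j

end SMB
namespace SMB

/-- Player 1 (index 0). -/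
def p0 (n : ℕ) : Fin (2 ^ (n + 1)) := ⟨0, by positivity⟩

variable {n : ℕ}

lemma mem_smalls {i : Fin (2 ^ (n + 1))} :
    i ∈ smalls n ↔ 1 ≤ (i : ℕ) ∧ (i : ℕ) < 2 ^ n := by
  simp [smalls]

lemma mem_mediums {i : Fin (2 ^ (n + 1))} :
    i ∈ mediums n ↔ 2 ^ n ≤ (i : ℕ) ∧ (i : ℕ) < 2 ^ n + 2 ^ (n - 1) := by
  simp [mediums]

lemma mem_bigs {i : Fin (2 ^ (n + 1))} :
    i ∈ bigs n ↔ 2 ^ n + 2 ^ (n - 1) ≤ (i : ℕ) := by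
  simp [bigs]

lemma group_trichotomy (i : Fin (2 ^ (n + 1))) :
    i = p0 n ∨ i ∈ smalls n ∨ i ∈ mediums n ∨ i ∈ bigs n := by
  rcases Nat.eq_zero_or_pos (i : ℕ) with h | h
  · left; exact Fin.ext h
  · right
    rw [mem_smalls, mem_mediums, mem_bigs]
    omega

lemma p0_not_small : p0 n ∉ smalls n := by rw [mem_smalls]; simp [p0]
lemma p0_not_medium : p0 n ∉ mediums n := by
  rw [mem_mediums]; simp [p0]
lemma p0_not_big : p0 n ∉ bigs n := by
  rw [mem_bigs]; simp [p0]

lemma small_ne_p0 {s : Fin (2 ^ (n + 1))} (hs : s ∈ smalls n) : s ≠ p0 n :=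
  fun h => p0_not_small (h ▸ hs)
lemma medium_ne_p0 {m : Fin (2 ^ (n + 1))} (hm : m ∈ mediums n) : m ≠ p0 n :=
  fun h => p0_not_medium (h ▸ hm)
lemma big_ne_p0 {b : Fin (2 ^ (n + 1))} (hb : b ∈ bigs n) : b ≠ p0 n :=
  fun h => p0_not_big (h ▸ hb)

lemma small_ne_medium {s m : Fin (2 ^ (n + 1))} (hs : s ∈ smalls n)
    (hm : m ∈ mediums n) : s ≠ m := by
  rw [mem_smalls] at hs; rw [mem_mediums] at hm
  intro h; rw [h] at hs; omega
lemma small_ne_big {s b : Fin (2 ^ (n + 1))} (hs : s ∈ smalls n)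
    (hb : b ∈ bigs n) : s ≠ b := by
  rw [mem_smalls] at hs; rw [mem_bigs] at hb
  intro h; rw [h] at hs
  have : (0:ℕ) < 2 ^ (n-1) := by positivity
  omega
lemma medium_ne_big {m b : Fin (2 ^ (n + 1))} (hm : m ∈ mediums n)
    (hb : b ∈ bigs n) : m ≠ b := by
  rw [mem_mediums] at hm; rw [mem_bigs] at hb
  intro h; rw [h] at hm; omega

lemma univ_decomp :
    (Finset.univ : Finset (Fin (2 ^ (n + 1)))) =
      insert (p0 n) (smalls n ∪ mediums n ∪ bigs n) := by
  ext i
  simp only [Finset.mem_univ, Finset.mem_insert, Finset.mem_union, true_iff]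
  rcases group_trichotomy i with h | h | h | h
  · exact Or.inl h
  · exact Or.inr (Or.inl (Or.inl h))
  · exact Or.inr (Or.inl (Or.inr h))
  · exact Or.inr (Or.inr h)

lemma disj_sm : Disjoint (smalls n) (mediums n) :=
  Finset.disjoint_left.mpr fun a ha hb => small_ne_medium ha hb rfl
lemma disj_sb : Disjoint (smalls n) (bigs n) :=
  Finset.disjoint_left.mpr fun a ha hb => small_ne_big ha hb rfl
lemma disj_mb : Disjoint (mediums n) (bigs n) :=
  Finset.disjoint_left.mpr fun a ha hb => medium_ne_big ha hb rfl

lemma sum_decomp (F : Fin (2 ^ (n + 1)) → ℝ) :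
    ∑ j, F j = F (p0 n) + ((∑ j ∈ smalls n, F j + ∑ j ∈ mediums n, F j) +
      ∑ j ∈ bigs n, F j) := by
  rw [univ_decomp, Finset.sum_insert, Finset.sum_union, Finset.sum_union disj_sm]
  · exact Finset.disjoint_union_left.mpr ⟨disj_sb, disj_mb⟩
  · simp only [Finset.mem_union]
    push_neg
    exact ⟨⟨p0_not_small, p0_not_medium⟩, p0_not_big⟩

section Pfacts

variable {ε : ℝ} {P : Fin (2 ^ (n + 1)) → Fin (2 ^ (n + 1)) → ℝ}
  (hP : SMBMatrix n ε P)

include hP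

lemma P_p0_small {s} (hs : s ∈ smalls n) : P (p0 n) s = 1 := hP.2.1 s hs
lemma P_p0_medium {m} (hm : m ∈ mediums n) : P (p0 n) m = 0.4 := hP.2.2.1 m hm
lemma P_p0_big {b} (hb : b ∈ bigs n) : P (p0 n) b = 0.6 := hP.2.2.2.1 b hb
lemma P_small_medium {s m} (hs : s ∈ smalls n) (hm : m ∈ mediums n) :
    P s m = 0 := hP.2.2.2.2.1 s hs m hm
lemma P_small_big {s b} (hs : s ∈ smalls n) (hb : b ∈ bigs n) :
    P s b = 0 := hP.2.2.2.2.2.1 s hs b hb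
lemma P_medium_big {m b} (hm : m ∈ mediums n) (hb : b ∈ bigs n) :
    P m b = 0.5 - ε / 2 := hP.2.2.2.2.2.2 m hm b hb

lemma P_big_medium {m b} (hm : m ∈ mediums n) (hb : b ∈ bigs n) :
    P b m = 0.5 + ε / 2 := by
  have h := (hP.1 m b (medium_ne_big hm hb)).2.2
  rw [P_medium_big hP hm hb] at h
  linarith

lemma P_nonneg {i j} (h : i ≠ j) : 0 ≤ P i j := (hP.1 i j h).1
lemma P_le_one {i j} (h : i ≠ j) : P i j ≤ 1 := (hP.1 i j h).2.1

end Pfacts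

end SMB
namespace SMB

variable {n : ℕ}

/-- Sum of winning probabilities of big players. -/
noncomputable def BBs {n m : ℕ} (P : Fin (2 ^ (n + 1)) → Fin (2 ^ (n + 1)) → ℝ)
    (t : BT (Fin (2 ^ (n + 1))) m) : ℝ := ∑ j ∈ bigs n, wd P t j

/-- Sum of winning probabilities of medium players. -/
noncomputable def MMs {n m : ℕ} (P : Fin (2 ^ (n + 1)) → Fin (2 ^ (n + 1)) → ℝ)
    (t : BT (Fin (2 ^ (n + 1))) m) : ℝ := ∑ j ∈ mediums n, wd P t j

section Main

variable {ε : ℝ} {P : Fin (2 ^ (n + 1)) → Fin (2 ^ (n + 1)) → ℝ}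
  (hP : SMBMatrix n ε P)

include hP

/-- In a subtree avoiding player 0 and containing a medium or big player,
no small player can win. -/
lemma smalls_lose : ∀ {m : ℕ} (t : BT (Fin (2 ^ (n + 1))) m),
    t.leaves.Nodup → p0 n ∉ t.leaves →
    (∃ j ∈ t.leaves, j ∈ mediums n ∨ j ∈ bigs n) →
    ∀ i ∈ smalls n, wd P t i = 0
  | _, .leaf a, _, _, hex, i, hi => by
      obtain ⟨j, hj, hjmb⟩ := hex
      simp only [BT.leaves, List.mem_singleton] at hj
      subst hj
      have : i ≠ j := by
        rcases hjmb with h | h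
        · exact small_ne_medium hi h
        · exact small_ne_big hi h
      simp [wd, this]
  | _, .node L R, hnd, hp0, hex, i, hi => by
      obtain ⟨ndL, ndR, hdisj⟩ := nodup_node hnd
      have hp0L : p0 n ∉ L.leaves := fun h => hp0 (by simp [BT.leaves, h])
      have hp0R : p0 n ∉ R.leaves := fun h => hp0 (by simp [BT.leaves, h])
      obtain ⟨j, hj, hjmb⟩ := hex
      simp only [BT.leaves, List.mem_append] at hj
      have key : ∀ {m' : ℕ} (A : BT (Fin (2 ^ (n + 1))) m'),
          p0 n ∉ A.leaves → (∀ s ∈ smalls n, wd P A s = 0) →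
          ∑ j', wd P A j' * P i j' = 0 := by
        intro m' A hp0A hsm
        refine Finset.sum_eq_zero fun j' _ => ?_
        rcases group_trichotomy j' with h | h | h | h
        · rw [h, wd_support P A _ hp0A]; ring
        · rw [hsm j' h]; ring
        · rw [P_small_medium hP hi h]; ring
        · rw [P_small_big hP hi h]; ring
      rcases hj with hjL | hjR
      · have hsmL := smalls_lose L ndL hp0L ⟨j, hjL, hjmb⟩
        simp only [wd]
        rw [hsmL i hi, key L hp0L hsmL]
        ring
      · have hsmR := smalls_lose R ndR hp0R ⟨j, hjR, hjmb⟩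
        simp only [wd]
        rw [hsmR i hi, key R hp0R hsmR]
        ring

/-- Player 0 wins a subtree consisting only of itself and small players. -/
lemma wd_p0_allsmall : ∀ {m : ℕ} (t : BT (Fin (2 ^ (n + 1))) m),
    t.leaves.Nodup → p0 n ∈ t.leaves →
    (∀ j ∈ t.leaves, j = p0 n ∨ j ∈ smalls n) →
    wd P t (p0 n) = 1
  | _, .leaf a, _, hp0, _ => by
      simp only [BT.leaves, List.mem_singleton] at hp0
      simp [wd, hp0]
  | _, .node L R, hnd, hp0, hall => by
      obtain ⟨ndL, ndR, hdisj⟩ := nodup_node hnd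
      have hallL : ∀ j ∈ L.leaves, j = p0 n ∨ j ∈ smalls n :=
        fun j hj => hall j (by simp [BT.leaves, hj])
      have hallR : ∀ j ∈ R.leaves, j = p0 n ∨ j ∈ smalls n :=
        fun j hj => hall j (by simp [BT.leaves, hj])
      have key : ∀ {m' : ℕ} (A : BT (Fin (2 ^ (n + 1))) m'),
          A.leaves.Nodup → p0 n ∉ A.leaves →
          (∀ j ∈ A.leaves, j = p0 n ∨ j ∈ smalls n) →
          ∑ j', wd P A j' * P (p0 n) j' = 1 := by
        intro m' A ndA hp0A hallA
        rw [← wd_sum_one hP.1 A ndA]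
        refine Finset.sum_congr rfl fun j' _ => ?_
        by_cases hj' : j' ∈ A.leaves
        · rcases hallA j' hj' with h | h
          · exact absurd (h ▸ hj') hp0A
          · rw [P_p0_small hP h, mul_one]
        · rw [wd_support P A _ hj']; ring
      simp only [BT.leaves, List.mem_append] at hp0
      rcases hp0 with hp0L | hp0R
      · have hp0R : p0 n ∉ R.leaves := hdisj _ hp0L
        simp only [wd]
        rw [wd_p0_allsmall L ndL hp0L hallL, key R ndR hp0R hallR,
          wd_support P R _ hp0R]
        ring
      · have hp0L : p0 n ∉ L.leaves := fun h => hdisj _ h hp0R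
        simp only [wd]
        rw [wd_p0_allsmall R ndR hp0R hallR, key L ndL hp0L hallL,
          wd_support P L _ hp0L]
        ring

/-- Score of player 0 against a subtree where no small player (nor player 0) wins. -/
lemma score_eq {m : ℕ} (t : BT (Fin (2 ^ (n + 1))) m)
    (hp0 : p0 n ∉ t.leaves) (hsm : ∀ i ∈ smalls n, wd P t i = 0) :
    ∑ j, wd P t j * P (p0 n) j = 0.4 * MMs P t + 0.6 * BBs P t := by
  rw [sum_decomp (fun j => wd P t j * P (p0 n) j)]
  rw [wd_support P t _ hp0]
  have h1 : ∑ j ∈ smalls n, wd P t j * P (p0 n) j = 0 :=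
    Finset.sum_eq_zero fun j hj => by rw [hsm j hj]; ring
  have h2 : ∑ j ∈ mediums n, wd P t j * P (p0 n) j = 0.4 * MMs P t := by
    rw [MMs, Finset.mul_sum]
    exact Finset.sum_congr rfl fun j hj => by rw [P_p0_medium hP hj]; ring
  have h3 : ∑ j ∈ bigs n, wd P t j * P (p0 n) j = 0.6 * BBs P t := by
    rw [BBs, Finset.mul_sum]
    exact Finset.sum_congr rfl fun j hj => by rw [P_p0_big hP hj]; ring
  rw [h1, h2, h3]; ring

lemma MBs_le_one {m : ℕ} (t : BT (Fin (2 ^ (n + 1))) m)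
    (hnd : t.leaves.Nodup) : MMs P t + BBs P t ≤ 1 := by
  rw [MMs, BBs, ← Finset.sum_union disj_mb]
  exact wd_sum_subset_le_one hP.1 t hnd _

lemma BBs_nonneg {m : ℕ} (t : BT (Fin (2 ^ (n + 1))) m)
    (hnd : t.leaves.Nodup) : 0 ≤ BBs P t :=
  wd_sum_subset_nonneg hP.1 t hnd _

lemma MMs_nonneg {m : ℕ} (t : BT (Fin (2 ^ (n + 1))) m)
    (hnd : t.leaves.Nodup) : 0 ≤ MMs P t :=
  wd_sum_subset_nonneg hP.1 t hnd _

lemma BBs_le_one {m : ℕ} (t : BT (Fin (2 ^ (n + 1))) m)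
    (hnd : t.leaves.Nodup) : BBs P t ≤ 1 :=
  wd_sum_subset_le_one hP.1 t hnd _

/-- If all leaves are medium or big, medium and big probabilities sum to 1. -/
lemma MBs_eq_one {m : ℕ} (t : BT (Fin (2 ^ (n + 1))) m)
    (hnd : t.leaves.Nodup)
    (hmb : ∀ j ∈ t.leaves, j ∈ mediums n ∨ j ∈ bigs n) :
    MMs P t + BBs P t = 1 := by
  have := wd_sum_one hP.1 t hnd
  rw [sum_decomp (wd P t)] at this
  have hp0 : wd P t (p0 n) = 0 := by
    refine wd_support P t _ fun h => ?_
    rcases hmb _ h with h' | h'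
    · exact p0_not_medium h'
    · exact p0_not_big h'
  have hsm : ∑ j ∈ smalls n, wd P t j = 0 := by
    refine Finset.sum_eq_zero fun j hj => ?_
    refine wd_support P t _ fun h => ?_
    rcases hmb _ h with h' | h'
    · exact small_ne_medium hj h' rfl
    · exact small_ne_big hj h' rfl
  rw [hp0, hsm] at this
  rw [MMs, BBs]
  linarith

/-- The recursion for the big-player winning probability on medium/big subtrees. -/
lemma BBs_node {m : ℕ} (L R : BT (Fin (2 ^ (n + 1))) m)
    (hnd : (BT.node L R).leaves.Nodup)
    (hmb : ∀ j ∈ (BT.node L R).leaves, j ∈ mediums n ∨ j ∈ bigs n) :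
    BBs P (BT.node L R) = (BBs P L + BBs P R) / 2 +
      (BBs P L + BBs P R - 2 * BBs P L * BBs P R) * (ε / 2) := by
  obtain ⟨ndL, ndR, hdisj⟩ := nodup_node hnd
  have hmbL : ∀ j ∈ L.leaves, j ∈ mediums n ∨ j ∈ bigs n :=
    fun j hj => hmb j (by simp [BT.leaves, hj])
  have hmbR : ∀ j ∈ R.leaves, j ∈ mediums n ∨ j ∈ bigs n :=
    fun j hj => hmb j (by simp [BT.leaves, hj])
  -- score of a big player against a medium/big subtree
  have key : ∀ {m' : ℕ} (A : BT (Fin (2 ^ (n + 1))) m'),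
      A.leaves.Nodup → (∀ j ∈ A.leaves, j ∈ mediums n ∨ j ∈ bigs n) →
      ∀ i ∈ bigs n,
      ∑ j', wd P A j' * P i j' =
        (0.5 + ε / 2) * MMs P A + ∑ j' ∈ bigs n, wd P A j' * P i j' := by
    intro m' A ndA hmbA i hi
    rw [sum_decomp (fun j' => wd P A j' * P i j')]
    have hp0 : wd P A (p0 n) = 0 := by
      refine wd_support P A _ fun h => ?_
      rcases hmbA _ h with h' | h'
      · exact p0_not_medium h'
      · exact p0_not_big h'
    have hsm : ∑ j ∈ smalls n, wd P A j * P i j = 0 := by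
      refine Finset.sum_eq_zero fun j hj => ?_
      have : wd P A j = 0 := by
        refine wd_support P A _ fun h => ?_
        rcases hmbA _ h with h' | h'
        · exact small_ne_medium hj h' rfl
        · exact small_ne_big hj h' rfl
      rw [this]; ring
    have hmed : ∑ j ∈ mediums n, wd P A j * P i j = (0.5 + ε / 2) * MMs P A := by
      rw [MMs, Finset.mul_sum]
      exact Finset.sum_congr rfl fun j hj => by rw [P_big_medium hP hj hi]; ring
    rw [hp0, hsm, hmed]
    ring
  have expand : BBs P (BT.node L R) =
      ∑ i ∈ bigs n, (wd P L i * ∑ j', wd P R j' * P i j') +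
      ∑ i ∈ bigs n, (wd P R i * ∑ j', wd P L j' * P i j') := by
    rw [BBs, ← Finset.sum_add_distrib]
    rfl
  rw [expand]
  have e1 : ∑ i ∈ bigs n, (wd P L i * ∑ j', wd P R j' * P i j') =
      (0.5 + ε / 2) * MMs P R * BBs P L +
      ∑ i ∈ bigs n, ∑ j' ∈ bigs n, wd P L i * wd P R j' * P i j' := by
    rw [Finset.sum_congr rfl fun i hi => by rw [key R ndR hmbR i hi]]
    simp only [mul_add]
    rw [Finset.sum_add_distrib]
    congr 1
    · rw [BBs, Finset.mul_sum]
      exact Finset.sum_congr rfl fun i _ => by ring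
    · refine Finset.sum_congr rfl fun i _ => ?_
      rw [Finset.mul_sum]
      exact Finset.sum_congr rfl fun j _ => by ring
  have e2 : ∑ i ∈ bigs n, (wd P R i * ∑ j', wd P L j' * P i j') =
      (0.5 + ε / 2) * MMs P L * BBs P R +
      ∑ i ∈ bigs n, ∑ j' ∈ bigs n, wd P L j' * wd P R i * P i j' := by
    rw [Finset.sum_congr rfl fun i hi => by rw [key L ndL hmbL i hi]]
    simp only [mul_add]
    rw [Finset.sum_add_distrib]
    congr 1
    · rw [BBs, Finset.mul_sum]
      exact Finset.sum_congr rfl fun i _ => by ring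
    · refine Finset.sum_congr rfl fun i _ => ?_
      rw [Finset.mul_sum]
      exact Finset.sum_congr rfl fun j _ => by ring
  rw [e1, e2]
  have e3 : (∑ i ∈ bigs n, ∑ j' ∈ bigs n, wd P L i * wd P R j' * P i j') +
      (∑ i ∈ bigs n, ∑ j' ∈ bigs n, wd P L j' * wd P R i * P i j') =
      BBs P L * BBs P R := by
    rw [Finset.sum_comm (f := fun i j' => wd P L j' * wd P R i * P i j')]
    rw [← Finset.sum_add_distrib]
    have : ∀ i ∈ bigs n,
        ((∑ j' ∈ bigs n, wd P L i * wd P R j' * P i j') +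
         (∑ j' ∈ bigs n, wd P L i * wd P R j' * P j' i)) =
        ∑ j' ∈ bigs n, wd P L i * wd P R j' := by
      intro i _
      rw [← Finset.sum_add_distrib]
      refine Finset.sum_congr rfl fun j _ => ?_
      rw [← mul_add]
      by_cases h0 : wd P L i * wd P R j = 0
      · rw [h0, zero_mul]
      · have hiL : i ∈ L.leaves := by
          by_contra hc; exact h0 (by rw [wd_support P L i hc]; ring)
        have hjR : j ∈ R.leaves := by
          by_contra hc; exact h0 (by rw [wd_support P R j hc]; ring)
        have hij : i ≠ j := fun h => (hdisj i hiL) (h ▸ hjR)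
        rw [(hP.1 i j hij).2.2, mul_one]
    rw [Finset.sum_congr rfl this, ← Finset.sum_mul_sum]
    rfl
  have hMl : MMs P L = 1 - BBs P L := by
    have := MBs_eq_one hP L ndL hmbL; linarith
  have hMr : MMs P R = 1 - BBs P R := by
    have := MBs_eq_one hP R ndR hmbR; linarith
  rw [hMl, hMr]
  have : ∀ a b c d : ℝ, a + b + (c + d) = (b + d) + (a + c) := by intros; ring
  rw [this, e3]
  ring

end Main

end SMB
namespace SMB

lemma pairList_append {α : Type} :
    ∀ (l₁ l₂ : List α), Even l₁.length →
      pairList (l₁ ++ l₂) = pairList l₁ ++ pairList l₂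
  | [], l₂, _ => rfl
  | [a], _, h => by simp at h
  | a :: b :: t, l₂, h => by
      have ht : Even t.length := by
        obtain ⟨k, hk⟩ := h
        simp only [List.length_cons] at hk
        exact ⟨k - 1, by omega⟩
      simp only [List.cons_append, pairList]
      rw [pairList_append t l₂ ht]

lemma pairList_mem {α : Type} :
    ∀ (l : List α) (q : α × α), q ∈ pairList l → q.1 ∈ l ∧ q.2 ∈ l
  | a :: b :: t, q, h => by
      simp only [pairList, List.mem_cons] at h
      rcases h with h | h
      · subst h; simp
      · have := pairList_mem t q h
        simp [this.1, this.2]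

lemma firstPairs_node {α : Type} {m : ℕ} (L R : BT α (m + 1)) :
    firstPairs (BT.node L R) = firstPairs L ++ firstPairs R := by
  rw [firstPairs, firstPairs, firstPairs, BT.leaves, pairList_append]
  rw [leaves_length]
  exact ⟨2 ^ m, by rw [pow_succ]; ring⟩

/-- The winning probability of big players in a fully medium-big-paired draw
of height `h + 1`. -/
noncomputable def mu (e : ℝ) : ℕ → ℝ
  | 0 => 1 / 2 + e / 2
  | h + 1 => mu e h + mu e h * (1 - mu e h) * e

variable {n : ℕ} {ε : ℝ} {P : Fin (2 ^ (n + 1)) → Fin (2 ^ (n + 1)) → ℝ}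
  (hP : SMBMatrix n ε P)

lemma BBs_leaf (j : Fin (2 ^ (n + 1))) :
    BBs P (BT.leaf j) = if j ∈ bigs n then 1 else 0 := by
  rw [BBs]
  simp [wd, Finset.sum_ite_eq']

include hP

lemma BBs_mixed : ∀ {h : ℕ} (t : BT (Fin (2 ^ (n + 1))) (h + 1)),
    t.leaves.Nodup → (∀ j ∈ t.leaves, j ∈ mediums n ∨ j ∈ bigs n) →
    MBPaired n t → BBs P t = mu ε h
  | 0, .node (.leaf a) (.leaf b), hnd, hmb, hpair => by
      have hq : ((a, b) : _ × _) ∈ firstPairs (BT.node (BT.leaf a) (BT.leaf b)) := by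
        simp [firstPairs, BT.leaves, pairList]
      have := hpair _ hq
      rw [BBs_node hP _ _ hnd hmb, BBs_leaf, BBs_leaf]
      rcases this with ⟨hm, hb⟩ | ⟨hb, hm⟩
      · simp only at hm hb
        rw [if_pos hb, if_neg (fun h => medium_ne_big hm h rfl)]
        rw [mu]; ring
      · simp only at hm hb
        rw [if_pos hb, if_neg (fun h => medium_ne_big hm h rfl)]
        rw [mu]; ring
  | h + 1, .node L R, hnd, hmb, hpair => by
      obtain ⟨ndL, ndR, _⟩ := nodup_node hnd
      have hmbL : ∀ j ∈ L.leaves, j ∈ mediums n ∨ j ∈ bigs n :=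
        fun j hj => hmb j (by simp [BT.leaves, hj])
      have hmbR : ∀ j ∈ R.leaves, j ∈ mediums n ∨ j ∈ bigs n :=
        fun j hj => hmb j (by simp [BT.leaves, hj])
      have hfp := firstPairs_node L R
      have hpL : MBPaired n L := fun q hq => hpair q (by rw [hfp]; simp [hq])
      have hpR : MBPaired n R := fun q hq => hpair q (by rw [hfp]; simp [hq])
      rw [BBs_node hP _ _ hnd hmb, BBs_mixed L ndL hmbL hpL,
        BBs_mixed R ndR hmbR hpR]
      show _ = mu ε h + mu ε h * (1 - mu ε h) * ε
      ring

end SMB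
namespace SMB

/-- Number of big players among the leaves. -/
def bigCount (n : ℕ) {m : ℕ} (t : BT (Fin (2 ^ (n + 1))) m) : ℕ :=
  t.leaves.countP (fun j => decide (j ∈ bigs n))

/-- Fraction of big players among the leaves. -/
noncomputable def ff (n : ℕ) {m : ℕ} (t : BT (Fin (2 ^ (n + 1))) m) : ℝ :=
  (bigCount n t : ℝ) / 2 ^ m

/-- First-order derivative in `ε` of the big-win probability. -/
noncomputable def DD (n : ℕ) : {m : ℕ} → BT (Fin (2 ^ (n + 1))) m → ℝ
  | _, .leaf _ => 0
  | _, .node L R => (DD n L + DD n R) / 2 +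
      (ff n L + ff n R - 2 * ff n L * ff n R)

variable {n : ℕ}

lemma bigCount_node {m : ℕ} (L R : BT (Fin (2 ^ (n + 1))) m) :
    bigCount n (BT.node L R) = bigCount n L + bigCount n R := by
  rw [bigCount, BT.leaves, List.countP_append]; rfl

lemma ff_node {m : ℕ} (L R : BT (Fin (2 ^ (n + 1))) m) :
    ff n (BT.node L R) = (ff n L + ff n R) / 2 := by
  rw [ff, ff, ff, bigCount_node, pow_succ]
  push_cast
  field_simp

lemma ff_leaf (j : Fin (2 ^ (n + 1))) :
    ff n (BT.leaf j) = if j ∈ bigs n then 1 else 0 := by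
  rw [ff, bigCount]
  by_cases h : j ∈ bigs n <;> simp [BT.leaves, List.countP, List.countP.go, h]

lemma ff_nonneg {m : ℕ} (t : BT (Fin (2 ^ (n + 1))) m) : 0 ≤ ff n t := by
  rw [ff]; positivity

lemma ff_le_one {m : ℕ} (t : BT (Fin (2 ^ (n + 1))) m) : ff n t ≤ 1 := by
  rw [ff, div_le_one (by positivity)]
  have h1 : bigCount n t ≤ t.leaves.length := List.countP_le_length
  rw [leaves_length] at h1
  exact_mod_cast h1

lemma DD_abs_le : ∀ {m : ℕ} (t : BT (Fin (2 ^ (n + 1))) m),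
    -(m : ℝ) ≤ DD n t ∧ DD n t ≤ m
  | _, .leaf _ => by simp [DD]
  | _, .node L R => by
      obtain ⟨h1, h2⟩ := DD_abs_le L
      obtain ⟨h3, h4⟩ := DD_abs_le R
      have g1 : 0 ≤ ff n L + ff n R - 2 * ff n L * ff n R := by
        nlinarith [ff_nonneg L, ff_nonneg R, ff_le_one L, ff_le_one R]
      have g2 : ff n L + ff n R - 2 * ff n L * ff n R ≤ 1 := by
        nlinarith [ff_nonneg L, ff_nonneg R, ff_le_one L, ff_le_one R]
      constructor
      · rw [DD]; push_cast; nlinarith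
      · rw [DD]; push_cast; nlinarith

lemma quad_ineq (u v : ℝ) (hu : |u| ≤ 1) (hv : |v| ≤ 1) :
    |u + v| ≤ |u| + |v| + 2 * (u * v) := by
  rcases abs_cases u with ⟨hu1, hu2⟩ | ⟨hu1, hu2⟩ <;>
    rcases abs_cases v with ⟨hv1, hv2⟩ | ⟨hv1, hv2⟩ <;>
      rcases abs_cases (u + v) with ⟨h1, h2⟩ | ⟨h1, h2⟩ <;>
        rw [hu1, hv1, h1] <;> rw [hu1] at hu <;> rw [hv1] at hv <;> nlinarith

/-- The algebraic induction step for the derivative bound. -/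
lemma DD_step (M : ℝ) {dL dR fL fR c : ℝ}
    (hL : dL ≤ (M + 1) / 2 - |2 * fL - 1| / 2 - c)
    (hR : dR ≤ (M + 1) / 2 - |2 * fR - 1| / 2)
    (hfL0 : 0 ≤ fL) (hfL1 : fL ≤ 1) (hfR0 : 0 ≤ fR) (hfR1 : fR ≤ 1)
    (hc : 0 ≤ c) :
    (dL + dR) / 2 + (fL + fR - 2 * fL * fR) ≤
      (M + 2) / 2 - |2 * ((fL + fR) / 2) - 1| / 2 - c / 2 := by
  have e0 : 2 * ((fL + fR) / 2) - 1 = ((2 * fL - 1) + (2 * fR - 1)) / 2 := by ring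
  have e1 : |2 * ((fL + fR) / 2) - 1| = |(2 * fL - 1) + (2 * fR - 1)| / 2 := by
    rw [e0, abs_div, abs_two]
  rw [e1]
  have hq := quad_ineq (2 * fL - 1) (2 * fR - 1)
    (abs_le.mpr ⟨by linarith, by linarith⟩)
    (abs_le.mpr ⟨by linarith, by linarith⟩)
  nlinarith [hq, hL, hR]

lemma DD_le : ∀ {m : ℕ} (t : BT (Fin (2 ^ (n + 1))) m),
    DD n t ≤ (m + 1) / 2 - |2 * ff n t - 1| / 2
  | _, .leaf j => by
      rw [DD, ff_leaf]
      by_cases h : j ∈ bigs n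
      · rw [if_pos h]; norm_num
      · rw [if_neg h]; norm_num
  | m + 1, .node L R => by
      have hL := DD_le L
      have hR := DD_le R
      rw [DD, ff_node]
      have := DD_step (M := (m : ℝ)) (dL := DD n L) (dR := DD n R)
        (fL := ff n L) (fR := ff n R) (c := 0) (by simpa using hL)
        hR (ff_nonneg L) (ff_le_one L) (ff_nonneg R) (ff_le_one R) le_rfl
      push_cast
      push_cast at this
      linarith

/-- A tree with a same-type first-round pair. -/
def BadT (n : ℕ) {m : ℕ} (t : BT (Fin (2 ^ (n + 1))) m) : Prop :=
  ∃ q ∈ firstPairs t, ((q.1 ∈ bigs n) ↔ (q.2 ∈ bigs n))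

lemma DD_bad : ∀ {m : ℕ} (t : BT (Fin (2 ^ (n + 1))) (m + 1)), BadT n t →
    DD n t ≤ (m + 1 + 1) / 2 - |2 * ff n t - 1| / 2 - (1 / 2) ^ (m + 1)
  | 0, .node (.leaf a) (.leaf b), hbad => by
      obtain ⟨q, hq, hiff⟩ := hbad
      have hq' : q = (a, b) := by
        simpa [firstPairs, BT.leaves, pairList] using hq
      subst hq'
      simp only at hiff
      rw [DD, DD, DD, ff_node, ff_leaf, ff_leaf]
      by_cases ha : a ∈ bigs n
      · rw [if_pos ha, if_pos (hiff.mp ha)]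
        norm_num
      · rw [if_neg ha, if_neg (fun h => ha (hiff.mpr h))]
        norm_num
  | m + 1, .node L R, hbad => by
      obtain ⟨q, hq, hiff⟩ := hbad
      rw [firstPairs_node, List.mem_append] at hq
      rw [DD, ff_node]
      rcases hq with hq | hq
      · have hL := DD_bad L ⟨q, hq, hiff⟩
        have hR := DD_le R
        have := DD_step (M := (m : ℝ) + 1) (dL := DD n L) (dR := DD n R)
          (fL := ff n L) (fR := ff n R) (c := (1 / 2 : ℝ) ^ (m + 1))
          (by push_cast at hL ⊢; linarith)
          (by push_cast at hR ⊢; linarith) (ff_nonneg L) (ff_le_one L)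
          (ff_nonneg R) (ff_le_one R) (by positivity)
        push_cast at this ⊢
        rw [show ((1:ℝ)/2) ^ (m + 1 + 1) = ((1:ℝ)/2) ^ (m + 1) / 2 by ring]
        linarith
      · have hR := DD_bad R ⟨q, hq, hiff⟩
        have hL := DD_le L
        have := DD_step (M := (m : ℝ) + 1) (dL := DD n R) (dR := DD n L)
          (fL := ff n R) (fR := ff n L) (c := (1 / 2 : ℝ) ^ (m + 1))
          (by push_cast at hR ⊢; linarith)
          (by push_cast at hL ⊢; linarith) (ff_nonneg R) (ff_le_one R)
          (ff_nonneg L) (ff_le_one L) (by positivity)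
        push_cast at this ⊢
        rw [show ((1:ℝ)/2) ^ (m + 1 + 1) = ((1:ℝ)/2) ^ (m + 1) / 2 by ring]
        ring_nf at this ⊢
        linarith

end SMB
namespace SMB

lemma sq_le_self_of_le_one {e : ℝ} (he0 : 0 ≤ e) (he1 : e ≤ 1) : e ^ 2 ≤ e := by
  nlinarith

/-- Second-order error constant for the tree approximation. -/
noncomputable def Cc : ℕ → ℝ
  | 0 => 0
  | m + 1 => 2 * Cc m + m

/-- Second-order error constant for `mu`. -/
noncomputable def Ac : ℕ → ℝ
  | 0 => 0
  | h + 1 => Ac h + (((h : ℝ) + 2) / 4 + Ac h) ^ 2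

lemma Cc_nonneg : ∀ m, 0 ≤ Cc m
  | 0 => le_refl 0
  | m + 1 => by
      have := Cc_nonneg m
      rw [Cc]
      positivity

lemma Ac_nonneg : ∀ h, 0 ≤ Ac h
  | 0 => le_refl 0
  | h + 1 => by
      have := Ac_nonneg h
      rw [Ac]
      positivity

lemma mu_approx (e : ℝ) (he0 : 0 ≤ e) (he1 : e ≤ 1) :
    ∀ h, |mu e h - (1 / 2 + ((h : ℝ) + 2) * e / 4)| ≤ Ac h * e ^ 2
  | 0 => by
      rw [mu, Ac]
      push_cast
      have : 1 / 2 + e / 2 - (1 / 2 + ((0 : ℝ) + 2) * e / 4) = 0 := by ring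
      rw [this]
      simp
  | h + 1 => by
      have ih := mu_approx e he0 he1 h
      have hq : (0 : ℝ) ≤ ((h : ℝ) + 2) / 4 + Ac h := by
        have := Ac_nonneg h; positivity
      have hx : |mu e h - 1 / 2| ≤ (((h : ℝ) + 2) / 4 + Ac h) * e := by
        have h1 : mu e h - 1 / 2 =
            (mu e h - (1 / 2 + ((h : ℝ) + 2) * e / 4)) + ((h : ℝ) + 2) * e / 4 := by
          ring
        rw [h1]
        calc |(mu e h - (1 / 2 + ((h : ℝ) + 2) * e / 4)) + ((h : ℝ) + 2) * e / 4|
            ≤ |mu e h - (1 / 2 + ((h : ℝ) + 2) * e / 4)| + |((h : ℝ) + 2) * e / 4| :=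
              abs_add_le _ _
          _ ≤ Ac h * e ^ 2 + ((h : ℝ) + 2) * e / 4 := by
              have : |((h : ℝ) + 2) * e / 4| = ((h : ℝ) + 2) * e / 4 := by
                rw [abs_of_nonneg]; positivity
              rw [this]
              linarith
          _ ≤ (((h : ℝ) + 2) / 4 + Ac h) * e := by
              have h2 : Ac h * e ^ 2 ≤ Ac h * e :=
                mul_le_mul_of_nonneg_left (sq_le_self_of_le_one he0 he1) (Ac_nonneg h)
              nlinarith
      have h2 : (mu e h - 1 / 2) ^ 2 ≤ (((h : ℝ) + 2) / 4 + Ac h) ^ 2 * e ^ 2 := by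
        have hm := mul_self_le_mul_self (abs_nonneg (mu e h - 1 / 2)) hx
        rw [abs_mul_abs_self] at hm
        nlinarith [hm]
      have h3 : e * (mu e h - 1 / 2) ^ 2 ≤ (((h : ℝ) + 2) / 4 + Ac h) ^ 2 * e ^ 2 := by
        nlinarith [sq_nonneg (mu e h - 1 / 2), h2]
      have hid : mu e h + mu e h * (1 - mu e h) * e -
          (1 / 2 + ((h : ℝ) + 1 + 2) * e / 4) =
          (mu e h - (1 / 2 + ((h : ℝ) + 2) * e / 4)) - e * (mu e h - 1 / 2) ^ 2 := by
        ring
      rw [mu, Ac]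
      push_cast
      rw [abs_le] at ih ⊢
      constructor
      · nlinarith [h3, hid, sq_nonneg e, mul_nonneg he0 (sq_nonneg (mu e h - 1/2))]
      · nlinarith [h3, hid, sq_nonneg e, mul_nonneg he0 (sq_nonneg (mu e h - 1/2))]

variable {n : ℕ} {ε : ℝ} {P : Fin (2 ^ (n + 1)) → Fin (2 ^ (n + 1)) → ℝ}

lemma BBs_approx (hP : SMBMatrix n ε P) (he0 : 0 ≤ ε) (he1 : ε ≤ 1) :
    ∀ {m : ℕ} (t : BT (Fin (2 ^ (n + 1))) m), t.leaves.Nodup →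
      (∀ j ∈ t.leaves, j ∈ mediums n ∨ j ∈ bigs n) →
      |BBs P t - ff n t - DD n t * (ε / 2)| ≤ Cc m * ε ^ 2
  | _, .leaf j, _, _ => by
      rw [BBs_leaf, ff_leaf, DD, Cc]
      simp
  | m + 1, .node L R, hnd, hmb => by
      obtain ⟨ndL, ndR, _⟩ := nodup_node hnd
      have hmbL : ∀ j ∈ L.leaves, j ∈ mediums n ∨ j ∈ bigs n :=
        fun j hj => hmb j (by simp [BT.leaves, hj])
      have hmbR : ∀ j ∈ R.leaves, j ∈ mediums n ∨ j ∈ bigs n :=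
        fun j hj => hmb j (by simp [BT.leaves, hj])
      have ihL := BBs_approx hP he0 he1 L ndL hmbL
      have ihR := BBs_approx hP he0 he1 R ndR hmbR
      have hdL := DD_abs_le (n := n) L
      have hdR := DD_abs_le (n := n) R
      have hxf : |BBs P L - ff n L| ≤ ((m : ℝ) / 2 + Cc m) * ε := by
        have h1 : BBs P L - ff n L =
            (BBs P L - ff n L - DD n L * (ε / 2)) + DD n L * (ε / 2) := by ring
        rw [h1]
        calc |(BBs P L - ff n L - DD n L * (ε / 2)) + DD n L * (ε / 2)|
            ≤ |BBs P L - ff n L - DD n L * (ε / 2)| + |DD n L * (ε / 2)| := abs_add_le _ _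
          _ ≤ Cc m * ε ^ 2 + (m : ℝ) * (ε / 2) := by
              have h2 : |DD n L * (ε / 2)| = |DD n L| * (ε / 2) := by
                rw [abs_mul, abs_of_nonneg (by linarith : (0:ℝ) ≤ ε / 2)]
              have h3 : |DD n L| ≤ (m : ℝ) := abs_le.mpr ⟨hdL.1, hdL.2⟩
              rw [h2]
              have := mul_le_mul_of_nonneg_right h3 (by linarith : (0:ℝ) ≤ ε / 2)
              linarith [ihL]
          _ ≤ ((m : ℝ) / 2 + Cc m) * ε := by
              have h2 : Cc m * ε ^ 2 ≤ Cc m * ε :=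
                mul_le_mul_of_nonneg_left (sq_le_self_of_le_one he0 he1) (Cc_nonneg m)
              nlinarith
      have hyf : |BBs P R - ff n R| ≤ ((m : ℝ) / 2 + Cc m) * ε := by
        have h1 : BBs P R - ff n R =
            (BBs P R - ff n R - DD n R * (ε / 2)) + DD n R * (ε / 2) := by ring
        rw [h1]
        calc |(BBs P R - ff n R - DD n R * (ε / 2)) + DD n R * (ε / 2)|
            ≤ |BBs P R - ff n R - DD n R * (ε / 2)| + |DD n R * (ε / 2)| := abs_add_le _ _
          _ ≤ Cc m * ε ^ 2 + (m : ℝ) * (ε / 2) := by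
              have h2 : |DD n R * (ε / 2)| = |DD n R| * (ε / 2) := by
                rw [abs_mul, abs_of_nonneg (by linarith : (0:ℝ) ≤ ε / 2)]
              have h3 : |DD n R| ≤ (m : ℝ) := abs_le.mpr ⟨hdR.1, hdR.2⟩
              rw [h2]
              have := mul_le_mul_of_nonneg_right h3 (by linarith : (0:ℝ) ≤ ε / 2)
              linarith [ihR]
          _ ≤ ((m : ℝ) / 2 + Cc m) * ε := by
              have h2 : Cc m * ε ^ 2 ≤ Cc m * ε :=
                mul_le_mul_of_nonneg_left (sq_le_self_of_le_one he0 he1) (Cc_nonneg m)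
              nlinarith
      have hx0 := BBs_nonneg hP L ndL
      have hx1 := BBs_le_one hP L ndL
      have hf0 := ff_nonneg (n := n) R
      have hf1 := ff_le_one (n := n) R
      have hE2 : |(BBs P L - ff n L) * (1 - 2 * ff n R) +
          (BBs P R - ff n R) * (1 - 2 * BBs P L)| ≤
          2 * (((m : ℝ) / 2 + Cc m) * ε) := by
        calc |(BBs P L - ff n L) * (1 - 2 * ff n R) +
            (BBs P R - ff n R) * (1 - 2 * BBs P L)|
            ≤ |(BBs P L - ff n L) * (1 - 2 * ff n R)| +
              |(BBs P R - ff n R) * (1 - 2 * BBs P L)| := abs_add_le _ _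
          _ ≤ ((m : ℝ) / 2 + Cc m) * ε * 1 + ((m : ℝ) / 2 + Cc m) * ε * 1 := by
              gcongr
              · rw [abs_mul]
                have hb : |1 - 2 * ff n R| ≤ 1 := by
                  rw [abs_le]; constructor <;> linarith
                have := mul_le_mul hxf hb (abs_nonneg _)
                  (mul_nonneg (by linarith [Cc_nonneg m] : (0:ℝ) ≤ (m : ℝ) / 2 + Cc m) he0)
                linarith [this]
              · rw [abs_mul]
                have hb : |1 - 2 * BBs P L| ≤ 1 := by
                  rw [abs_le]; constructor <;> linarith
                have := mul_le_mul hyf hb (abs_nonneg _)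
                  (mul_nonneg (by linarith [Cc_nonneg m] : (0:ℝ) ≤ (m : ℝ) / 2 + Cc m) he0)
                linarith [this]
          _ = 2 * (((m : ℝ) / 2 + Cc m) * ε) := by ring
      have hrec := BBs_node hP L R hnd hmb
      have hid : BBs P (BT.node L R) - ff n (BT.node L R) -
          DD n (BT.node L R) * (ε / 2) =
          ((BBs P L - ff n L - DD n L * (ε / 2)) +
           (BBs P R - ff n R - DD n R * (ε / 2))) / 2 +
          ((BBs P L - ff n L) * (1 - 2 * ff n R) +
           (BBs P R - ff n R) * (1 - 2 * BBs P L)) * (ε / 2) := by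
        rw [hrec, ff_node, DD]
        ring
      rw [hid]
      calc |_ + _| ≤ |((BBs P L - ff n L - DD n L * (ε / 2)) +
           (BBs P R - ff n R - DD n R * (ε / 2))) / 2| +
          |((BBs P L - ff n L) * (1 - 2 * ff n R) +
           (BBs P R - ff n R) * (1 - 2 * BBs P L)) * (ε / 2)| := abs_add_le _ _
        _ ≤ Cc m * ε ^ 2 + (((m : ℝ) / 2 + Cc m) * ε) * ε := by
            gcongr ?_ + ?_
            · rw [abs_div, abs_two]
              have := abs_add_le (BBs P L - ff n L - DD n L * (ε / 2))
                (BBs P R - ff n R - DD n R * (ε / 2))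
              have hsum : |BBs P L - ff n L - DD n L * (ε / 2)| +
                  |BBs P R - ff n R - DD n R * (ε / 2)| ≤ 2 * (Cc m * ε ^ 2) := by
                linarith [ihL, ihR]
              linarith
            · rw [abs_mul, abs_of_nonneg (by linarith : (0:ℝ) ≤ ε / 2)]
              calc |(BBs P L - ff n L) * (1 - 2 * ff n R) +
                  (BBs P R - ff n R) * (1 - 2 * BBs P L)| * (ε / 2)
                  ≤ 2 * (((m : ℝ) / 2 + Cc m) * ε) * (ε / 2) := by
                    exact mul_le_mul_of_nonneg_right hE2 (by linarith)
                _ = (((m : ℝ) / 2 + Cc m) * ε) * ε := by ring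
        _ ≤ Cc (m + 1) * ε ^ 2 := by
            rw [Cc]
            push_cast
            nlinarith [Cc_nonneg m, sq_nonneg ε, he0]

/-- mu is at least its first-order expansion, minus the error. -/
lemma mu_lower (he0 : 0 ≤ ε) (he1 : ε ≤ 1) (h : ℕ) :
    1 / 2 + ((h : ℝ) + 2) * ε / 4 - Ac h * ε ^ 2 ≤ mu ε h := by
  have := abs_le.mp (mu_approx ε he0 he1 h)
  linarith [this.1]

lemma mu_nonneg (he0 : 0 ≤ ε) (he1 : ε ≤ 1) : ∀ h, 0 ≤ mu ε h ∧ mu ε h ≤ 1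
  | 0 => by rw [mu]; constructor <;> linarith
  | h + 1 => by
      obtain ⟨h0, h1⟩ := mu_nonneg he0 he1 h
      rw [mu]
      have hA : 0 ≤ mu ε h * (1 - mu ε h) * ε :=
        mul_nonneg (mul_nonneg h0 (by linarith)) he0
      have hB : 0 ≤ (1 - mu ε h) * (1 - mu ε h * ε) := by
        apply mul_nonneg (by linarith)
        nlinarith
      constructor
      · linarith
      · nlinarith [hB]

/-- The threshold for ε. -/
noncomputable def eps0 (k : ℕ) : ℝ :=
  min 1 ((1 / 2) ^ (k + 1) / (2 * (Ac k + Cc (k + 1) + 1)))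

lemma eps0_pos (k : ℕ) : 0 < eps0 k := by
  rw [eps0]
  apply lt_min one_pos
  have h1 := Ac_nonneg k
  have h2 := Cc_nonneg (k + 1)
  positivity

/-- Core strict inequality: a half with a bad first-round pair does strictly
worse than the mixed value. -/
lemma BBs_lt_mu (hP : SMBMatrix n ε P) {k : ℕ} (t : BT (Fin (2 ^ (n + 1))) (k + 1))
    (hnd : t.leaves.Nodup) (hmb : ∀ j ∈ t.leaves, j ∈ mediums n ∨ j ∈ bigs n)
    (hf : ff n t = 1 / 2) (hbad : BadT n t)
    (he0 : 0 < ε) (heps : ε < eps0 k) :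
    BBs P t < mu ε k := by
  have he1 : ε ≤ 1 := le_of_lt (lt_of_lt_of_le heps (min_le_left _ _))
  have happ := abs_le.mp (BBs_approx hP (le_of_lt he0) he1 t hnd hmb)
  have hDD := DD_bad t hbad
  rw [hf] at hDD
  have habs : |2 * (1 / 2 : ℝ) - 1| = 0 := by norm_num
  rw [habs] at hDD
  have hmu := mu_lower (le_of_lt he0) he1 (ε := ε) k
  have hBB : BBs P t ≤ 1 / 2 + DD n t * (ε / 2) + Cc (k + 1) * ε ^ 2 := by
    have := happ.2
    rw [hf] at this
    linarith
  have hDDe : DD n t * (ε / 2) ≤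
      (((k : ℝ) + 2) / 2 - (1 / 2) ^ (k + 1)) * (ε / 2) := by
    apply mul_le_mul_of_nonneg_right _ (by linarith : (0:ℝ) ≤ ε / 2)
    push_cast at hDD
    linarith
  have hesmall : ε < (1 / 2) ^ (k + 1) / (2 * (Ac k + Cc (k + 1) + 1)) :=
    lt_of_lt_of_le heps (min_le_right _ _)
  have hcpos : (0:ℝ) < 2 * (Ac k + Cc (k + 1) + 1) := by
    have h1 := Ac_nonneg k
    have h2 := Cc_nonneg (k + 1)
    linarith
  have hprod : ε * (2 * (Ac k + Cc (k + 1) + 1)) < (1 / 2) ^ (k + 1) := by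
    rw [div_eq_mul_inv] at hesmall
    calc ε * (2 * (Ac k + Cc (k + 1) + 1)) <
        ((1 / 2) ^ (k + 1) * (2 * (Ac k + Cc (k + 1) + 1))⁻¹) *
          (2 * (Ac k + Cc (k + 1) + 1)) := by
          exact mul_lt_mul_of_pos_right hesmall hcpos
      _ = (1 / 2) ^ (k + 1) := by rw [mul_assoc, inv_mul_cancel₀ (ne_of_gt hcpos), mul_one]
  have hgap : (Ac k + Cc (k + 1)) * ε ^ 2 < (1 / 2) ^ (k + 1) * (ε / 2) := by
    have h1 := Ac_nonneg k
    have h2 := Cc_nonneg (k + 1)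
    nlinarith [hprod, he0]
  calc BBs P t ≤ 1 / 2 + DD n t * (ε / 2) + Cc (k + 1) * ε ^ 2 := hBB
    _ ≤ 1 / 2 + (((k : ℝ) + 2) / 2 - (1 / 2) ^ (k + 1)) * (ε / 2) +
        Cc (k + 1) * ε ^ 2 := by linarith
    _ = 1 / 2 + ((k : ℝ) + 2) * ε / 4 - (1 / 2) ^ (k + 1) * (ε / 2) +
        Cc (k + 1) * ε ^ 2 := by ring
    _ < 1 / 2 + ((k : ℝ) + 2) * ε / 4 - Ac k * ε ^ 2 := by nlinarith [hgap]
    _ ≤ mu ε k := hmu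

end SMB
namespace SMB

lemma card_val_filter (N a b : ℕ) (hb : b ≤ N) (hab : a ≤ b) :
    (Finset.univ.filter (fun i : Fin N => a ≤ (i : ℕ) ∧ (i : ℕ) < b)).card
      = b - a := by
  apply Finset.card_eq_of_bijective (fun i hi => (⟨a + i, by omega⟩ : Fin N))
  · intro x hx
    simp only [Finset.mem_filter, Finset.mem_univ, true_and] at hx
    refine ⟨(x : ℕ) - a, by omega, ?_⟩
    apply Fin.ext
    show a + ((x : ℕ) - a) = (x : ℕ)
    omega
  · intro i hi
    simp only [Finset.mem_filter, Finset.mem_univ, true_and]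
    exact ⟨by show a ≤ a + i; omega, by show a + i < b; omega⟩
  · intro i j hi hj hij
    have : a + i = a + j := congrArg Fin.val hij
    omega

variable {n : ℕ}

lemma pow_pred (hn : 1 ≤ n) : 2 ^ n = 2 ^ (n - 1) + 2 ^ (n - 1) := by
  have h : 2 ^ n = 2 ^ (n - 1) * 2 := by
    rw [← pow_succ]
    congr 1
    omega
  omega

lemma pow_le_succ : 2 ^ n ≤ 2 ^ (n + 1) := by
  rw [pow_succ]; omega

lemma card_smalls : (smalls n).card = 2 ^ n - 1 := by
  rw [smalls, card_val_filter _ 1 (2 ^ n) pow_le_succ Nat.one_le_two_pow]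

lemma card_bigs (hn : 1 ≤ n) : (bigs n).card = 2 ^ (n - 1) := by
  have hp := pow_pred hn
  have hs : (2:ℕ) ^ (n + 1) = 2 ^ n + 2 ^ n := by rw [pow_succ]; omega
  have h1 : bigs n = Finset.univ.filter
      (fun i : Fin (2 ^ (n + 1)) => 2 ^ n + 2 ^ (n - 1) ≤ (i : ℕ) ∧
        (i : ℕ) < 2 ^ (n + 1)) := by
    ext i
    simp only [bigs, Finset.mem_filter, Finset.mem_univ, true_and]
    exact ⟨fun h => ⟨h, i.isLt⟩, fun h => h.1⟩
  rw [h1, card_val_filter _ _ _ le_rfl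
    (by generalize h : 2^(n-1) = a at hp ⊢; omega)]
  generalize h : 2^(n-1) = a at hp ⊢
  omega

lemma card_mediums (hn : 1 ≤ n) : (mediums n).card = 2 ^ (n - 1) := by
  have hp := pow_pred hn
  have hs : (2:ℕ) ^ (n + 1) = 2 ^ n + 2 ^ n := by rw [pow_succ]; omega
  rw [mediums, card_val_filter _ _ _
    (by generalize h : 2^(n-1) = a at hp ⊢; omega)
    (by generalize h : 2^(n-1) = a at hp ⊢; omega)]
  generalize h : 2^(n-1) = a at hp ⊢
  omega

lemma card_smallish : (insert (p0 n) (smalls n)).card = 2 ^ n := by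
  rw [Finset.card_insert_of_notMem p0_not_small, card_smalls]
  have : (1:ℕ) ≤ 2 ^ n := Nat.one_le_two_pow
  omega

lemma list_multiset_eq {α : Type} [DecidableEq α] (l : List α) (S : Finset α)
    (h1 : l.Nodup) (h2 : ∀ x ∈ l, x ∈ S) (h3 : l.length = S.card) :
    (l : Multiset α) = S.val := by
  have hsub : l.toFinset ⊆ S := fun x hx => h2 x (List.mem_toFinset.mp hx)
  have hcard : S.card ≤ l.toFinset.card := by
    rw [List.toFinset_card_of_nodup h1]
    omega
  have heq : l.toFinset = S := Finset.eq_of_subset_of_card_le hsub hcard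
  have : (l : Multiset α).dedup = (l : Multiset α) :=
    Multiset.dedup_eq_self.mpr (by exact_mod_cast h1)
  calc (l : Multiset α) = (l : Multiset α).dedup := this.symm
    _ = l.toFinset.val := rfl
    _ = S.val := by rw [heq]

lemma isDraw_nodup {N m : ℕ} {t : BT (Fin N) m} (h : IsDraw t) :
    t.leaves.Nodup := by
  rw [List.nodup_iff_count_le_one]
  intro a
  exact le_of_eq (h a)

lemma mem_of_multiset_eq {L : BT (Fin (2 ^ (n + 1))) n}
    (hL : (L.leaves : Multiset (Fin (2 ^ (n + 1)))) =
      (insert (p0 n) (smalls n)).val) :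
    ∀ x, x ∈ L.leaves ↔ (x = p0 n ∨ x ∈ smalls n) := by
  intro x
  have h : x ∈ L.leaves ↔ x ∈ (L.leaves : Multiset (Fin (2 ^ (n + 1)))) := by
    simp
  rw [h, hL]
  show x ∈ (insert (p0 n) (smalls n)).val ↔ _
  rw [← Finset.mem_def, Finset.mem_insert]

/-- The facts about both halves when the left half is exactly player 0 plus
the small players. -/
lemma half_facts (hn : 1 ≤ n) {L R : BT (Fin (2 ^ (n + 1))) n}
    (hdraw : IsDraw (BT.node L R))
    (hL : (L.leaves : Multiset (Fin (2 ^ (n + 1)))) =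
      (insert (p0 n) (smalls n)).val) :
    p0 n ∈ L.leaves ∧ (∀ j ∈ L.leaves, j = p0 n ∨ j ∈ smalls n) ∧
    (∀ j ∈ R.leaves, j ∈ mediums n ∨ j ∈ bigs n) ∧ p0 n ∉ R.leaves ∧
    (R.leaves : Multiset (Fin (2 ^ (n + 1)))) = (mediums n ∪ bigs n).val := by
  have hmem := mem_of_multiset_eq hL
  have hnd := isDraw_nodup hdraw
  obtain ⟨ndL, ndR, hdisj⟩ := nodup_node hnd
  have hcountL : ∀ x : Fin (2 ^ (n + 1)),
      L.leaves.count x = if x = p0 n ∨ x ∈ smalls n then 1 else 0 := by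
    intro x
    by_cases hx : x = p0 n ∨ x ∈ smalls n
    · rw [if_pos hx]
      exact List.count_eq_one_of_mem ndL ((hmem x).mpr hx)
    · rw [if_neg hx]
      exact List.count_eq_zero_of_not_mem (fun h => hx ((hmem x).mp h))
  have hcountR : ∀ x : Fin (2 ^ (n + 1)),
      R.leaves.count x = if x = p0 n ∨ x ∈ smalls n then 0 else 1 := by
    intro x
    have h1 := hdraw x
    rw [show (BT.node L R).leaves = L.leaves ++ R.leaves from rfl,
      List.count_append, hcountL x] at h1
    by_cases hx : x = p0 n ∨ x ∈ smalls n
    · rw [if_pos hx]; rw [if_pos hx] at h1; omega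
    · rw [if_neg hx]; rw [if_neg hx] at h1; omega
  have hmemR : ∀ x, x ∈ R.leaves ↔ ¬(x = p0 n ∨ x ∈ smalls n) := by
    intro x
    rw [← List.count_pos_iff, hcountR x]
    by_cases hx : x = p0 n ∨ x ∈ smalls n
    · rw [if_pos hx]; simp [hx]
    · rw [if_neg hx]; simp [hx]
  have hmbR : ∀ j ∈ R.leaves, j ∈ mediums n ∨ j ∈ bigs n := by
    intro j hj
    have := (hmemR j).mp hj
    rcases group_trichotomy j with h | h | h | h
    · exact absurd (Or.inl h) this
    · exact absurd (Or.inr h) this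
    · exact Or.inl h
    · exact Or.inr h
  refine ⟨(hmem _).mpr (Or.inl rfl), fun j hj => (hmem j).mp hj, hmbR,
    fun h => (hmemR _).mp h (Or.inl rfl), ?_⟩
  apply list_multiset_eq _ _ ndR
  · intro x hx
    rw [Finset.mem_union]
    exact hmbR x hx
  · rw [leaves_length, Finset.card_union_of_disjoint disj_mb,
      card_mediums hn, card_bigs hn]
    have hp := pow_pred hn
    generalize h : 2^(n-1) = a at hp ⊢
    omega

end SMB
namespace SMB

variable {n : ℕ} {ε : ℝ} {P : Fin (2 ^ (n + 1)) → Fin (2 ^ (n + 1)) → ℝ}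

lemma ff_half (hn : 1 ≤ n) {R : BT (Fin (2 ^ (n + 1))) n}
    (hR : (R.leaves : Multiset (Fin (2 ^ (n + 1)))) = (mediums n ∪ bigs n).val) :
    ff n R = 1 / 2 := by
  have h1 : Multiset.countP (fun j => j ∈ bigs n)
      (R.leaves : Multiset (Fin (2 ^ (n + 1)))) = bigCount n R := by
    rw [Multiset.coe_countP]
    rfl
  have h3 : (mediums n ∪ bigs n).filter (fun j => j ∈ bigs n) = bigs n := by
    ext x
    simp only [Finset.mem_filter, Finset.mem_union]
    exact ⟨fun h => h.2, fun h => ⟨Or.inr h, h⟩⟩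
  have h4 : bigCount n R = 2 ^ (n - 1) := by
    rw [← h1, hR, Multiset.countP_eq_card_filter]
    rw [show Multiset.card (Multiset.filter (fun j => j ∈ bigs n)
      (mediums n ∪ bigs n).val) =
      ((mediums n ∪ bigs n).filter (fun j => j ∈ bigs n)).card from by
        rw [Finset.card, Finset.filter_val]]
    rw [h3, card_bigs hn]
  rw [ff, h4]
  have h5 : (2:ℝ) ^ n = 2 ^ (n - 1) * 2 := by
    rw [← pow_succ]
    congr 1
    omega
  rw [h5]
  push_cast
  have : (0:ℝ) < 2 ^ (n - 1) := by positivity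
  field_simp

variable (hP : SMBMatrix n ε P)
include hP

lemma score_nonneg {m : ℕ} (t : BT (Fin (2 ^ (n + 1))) m)
    (hnd : t.leaves.Nodup) (hp0 : p0 n ∉ t.leaves) :
    0 ≤ ∑ j, wd P t j * P (p0 n) j := by
  refine Finset.sum_nonneg fun j _ => ?_
  by_cases hj : j = p0 n
  · rw [hj, wd_support P t _ hp0]; simp
  · exact mul_nonneg (wd_nonneg hP.1 t hnd j) (P_nonneg hP (Ne.symm hj))

lemma score_le_one {m : ℕ} (t : BT (Fin (2 ^ (n + 1))) m)
    (hnd : t.leaves.Nodup) (hp0 : p0 n ∉ t.leaves) :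
    ∑ j, wd P t j * P (p0 n) j ≤ 1 := by
  rw [← wd_sum_one hP.1 t hnd]
  refine Finset.sum_le_sum fun j _ => ?_
  by_cases hj : j = p0 n
  · rw [hj, wd_support P t _ hp0]; simp
  · calc wd P t j * P (p0 n) j ≤ wd P t j * 1 :=
        mul_le_mul_of_nonneg_left (P_le_one hP (Ne.symm hj)) (wd_nonneg hP.1 t hnd j)
      _ = wd P t j := mul_one _

lemma score_le_06 {m : ℕ} (t : BT (Fin (2 ^ (n + 1))) m)
    (hnd : t.leaves.Nodup) (hp0 : p0 n ∉ t.leaves)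
    (hex : ∃ j ∈ t.leaves, j ∈ mediums n ∨ j ∈ bigs n) :
    ∑ j, wd P t j * P (p0 n) j ≤ 0.6 := by
  rw [score_eq hP t hp0 (smalls_lose hP t hnd hp0 hex)]
  have h1 := MBs_le_one hP t hnd
  have h2 := MMs_nonneg hP t hnd
  have h3 := BBs_nonneg hP t hnd
  nlinarith

lemma wd_p0_le_06 : ∀ {m : ℕ} (t : BT (Fin (2 ^ (n + 1))) m),
    t.leaves.Nodup → p0 n ∈ t.leaves →
    (∃ j ∈ t.leaves, j ∈ mediums n ∨ j ∈ bigs n) →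
    wd P t (p0 n) ≤ 0.6 := by
  intro m
  induction m with
  | zero =>
      intro t
      cases t with
      | leaf a =>
          intro _ hp0 hex
          obtain ⟨j, hj, hjmb⟩ := hex
          simp only [BT.leaves, List.mem_singleton] at hp0 hj
          rw [hj, ← hp0] at hjmb
          rcases hjmb with h | h
          · exact absurd h p0_not_medium
          · exact absurd h p0_not_big
  | succ m ih =>
      intro t
      cases t with
      | node A B =>
          intro hnd hp0 hex
          obtain ⟨ndA, ndB, hdisj⟩ := nodup_node hnd
          obtain ⟨j, hj, hjmb⟩ := hex
          simp only [BT.leaves, List.mem_append] at hp0 hj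
          have key : ∀ (A' B' : BT (Fin (2 ^ (n + 1))) m),
              A'.leaves.Nodup → B'.leaves.Nodup →
              (∀ a ∈ A'.leaves, a ∉ B'.leaves) →
              p0 n ∈ A'.leaves →
              (j ∈ A'.leaves ∨ j ∈ B'.leaves) →
              wd P A' (p0 n) * (∑ j', wd P B' j' * P (p0 n) j') +
                wd P B' (p0 n) * (∑ j', wd P A' j' * P (p0 n) j') ≤ 0.6 := by
            intro A' B' ndA' ndB' hdisj' hp0A hjmem
            have hp0B : p0 n ∉ B'.leaves := hdisj' _ hp0A
            rw [wd_support P B' _ hp0B, zero_mul, add_zero]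
            have hS0 := score_nonneg hP B' ndB' hp0B
            have hS1 := score_le_one hP B' ndB' hp0B
            have hw0 := wd_nonneg hP.1 A' ndA' (p0 n)
            have hw1 := wd_le_one hP.1 A' ndA' (p0 n)
            rcases hjmem with hjA | hjB
            · have hA6 := ih A' ndA' hp0A ⟨j, hjA, hjmb⟩
              nlinarith
            · have hB6 := score_le_06 hP B' ndB' hp0B ⟨j, hjB, hjmb⟩
              nlinarith
          rcases hp0 with hp0A | hp0B
          · exact key A B ndA ndB hdisj hp0A hj
          · have h := key B A ndB ndA (fun a ha hb => hdisj a hb ha) hp0B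
              (by tauto)
            calc wd P A (p0 n) * (∑ j', wd P B j' * P (p0 n) j') +
                wd P B (p0 n) * (∑ j', wd P A j' * P (p0 n) j')
                = wd P B (p0 n) * (∑ j', wd P A j' * P (p0 n) j') +
                  wd P A (p0 n) * (∑ j', wd P B j' * P (p0 n) j') := by ring
              _ ≤ 0.6 := h

/-- Value of a draw whose player-0 half is exactly player 0 and the smalls. -/
lemma wp_value_case1 (hn : 1 ≤ n) {L R : BT (Fin (2 ^ (n + 1))) n}
    (hdraw : IsDraw (BT.node L R))
    (hLm : (L.leaves : Multiset (Fin (2 ^ (n + 1)))) =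
      (insert (p0 n) (smalls n)).val) :
    wd P (BT.node L R) (p0 n) = 0.4 + 0.2 * BBs P R := by
  obtain ⟨hp0L, hallL, hmbR, hp0R, hRm⟩ := half_facts hn hdraw hLm
  have hnd := isDraw_nodup hdraw
  obtain ⟨ndL, ndR, hdisj⟩ := nodup_node hnd
  have hexR : ∃ j ∈ R.leaves, j ∈ mediums n ∨ j ∈ bigs n := by
    have hlen : R.leaves.length = 2 ^ n := leaves_length R
    have hne : R.leaves ≠ [] := by
      intro h
      rw [h] at hlen
      simp only [List.length_nil] at hlen
      have : 0 < 2 ^ n := by positivity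
      omega
    obtain ⟨j, hj⟩ := List.exists_mem_of_ne_nil _ hne
    exact ⟨j, hj, hmbR j hj⟩
  have hsm := smalls_lose hP R ndR hp0R hexR
  simp only [wd]
  rw [wd_p0_allsmall hP L ndL hp0L hallL, score_eq hP R hp0R hsm,
    wd_support P R _ hp0R]
  have hMB := MBs_eq_one hP R ndR hmbR
  have hM : MMs P R = 1 - BBs P R := by linarith
  rw [hM]
  ring

/-- Any draw whose player-0 half contains a medium or big player is weak. -/
lemma wp_case2 {L R : BT (Fin (2 ^ (n + 1))) n}
    (hdraw : IsDraw (BT.node L R)) (hp0L : p0 n ∈ L.leaves)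
    (hex : ∃ j ∈ L.leaves, j ∈ mediums n ∨ j ∈ bigs n) :
    wd P (BT.node L R) (p0 n) ≤ 0.36 := by
  have hnd := isDraw_nodup hdraw
  obtain ⟨ndL, ndR, hdisj⟩ := nodup_node hnd
  have hp0R : p0 n ∉ R.leaves := hdisj _ hp0L
  have hexR : ∃ j ∈ R.leaves, j ∈ mediums n ∨ j ∈ bigs n := by
    by_contra hc
    push_neg at hc
    have hall : ∀ j ∈ R.leaves, j ∈ smalls n := by
      intro j hj
      rcases group_trichotomy j with h | h | h | h
      · exact absurd (h ▸ hj) hp0R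
      · exact h
      · exact absurd (Or.inl h) (by simpa using hc j hj)
      · exact absurd (Or.inr h) (by simpa using hc j hj)
    have hsub : R.leaves.toFinset ⊆ smalls n :=
      fun x hx => hall x (List.mem_toFinset.mp hx)
    have hcard := Finset.card_le_card hsub
    rw [List.toFinset_card_of_nodup ndR, leaves_length, card_smalls] at hcard
    have : (1:ℕ) ≤ 2 ^ n := Nat.one_le_two_pow
    omega
  simp only [wd]
  rw [wd_support P R _ hp0R, zero_mul, add_zero]
  have h1 := wd_p0_le_06 hP L ndL hp0L hex
  have h2 := score_le_06 hP R ndR hp0R hexR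
  have h3 := wd_nonneg hP.1 L ndL (p0 n)
  have h4 := score_nonneg hP R ndR hp0R
  nlinarith

end SMB
namespace SMB

lemma map_leaves {α β : Type} (f : α → β) :
    ∀ {m : ℕ} (t : BT α m), (t.map f).leaves = t.leaves.map f
  | _, .leaf a => rfl
  | _, .node L R => by
      show ((L.map f).leaves ++ (R.map f).leaves) = _
      rw [map_leaves f L, map_leaves f R, BT.leaves, List.map_append]

lemma ordTree_leaves : ∀ (h s : ℕ), (ordTree h s).leaves = List.range' s (2 ^ h)
  | 0, s => rfl
  | h + 1, s => by
      show (ordTree h s).leaves ++ (ordTree h (s + 2 ^ h)).leaves = _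
      rw [ordTree_leaves h s, ordTree_leaves h (s + 2 ^ h), List.range'_append_1]
      congr 1
      rw [pow_succ]
      ring

lemma firstPairs_ordTree_map {α : Type} (f : ℕ → α) :
    ∀ (h s : ℕ) (q : α × α), q ∈ firstPairs ((ordTree (h + 1) s).map f) →
      ∃ j, j < 2 ^ h ∧ q = (f (s + 2 * j), f (s + 2 * j + 1))
  | 0, s, q, hq => by
      have h0 : firstPairs ((ordTree 1 s).map f) = [(f s, f (s + 1))] := rfl
      rw [h0] at hq
      simp only [List.mem_singleton] at hq
      exact ⟨0, by norm_num, by simpa using hq⟩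
  | h + 1, s, q, hq => by
      have hsplit : firstPairs ((ordTree (h + 2) s).map f) =
          firstPairs ((ordTree (h + 1) s).map f) ++
          firstPairs ((ordTree (h + 1) (s + 2 ^ (h + 1))).map f) :=
        firstPairs_node _ _
      rw [hsplit, List.mem_append] at hq
      rcases hq with hq | hq
      · obtain ⟨j, hj, hqe⟩ := firstPairs_ordTree_map f h s q hq
        exact ⟨j, lt_of_lt_of_le hj (by rw [pow_succ]; omega), hqe⟩
      · obtain ⟨j, hj, hqe⟩ := firstPairs_ordTree_map f h (s + 2 ^ (h + 1)) q hq
        refine ⟨2 ^ h + j, by rw [pow_succ]; omega, ?_⟩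
        have he : s + 2 ^ (h + 1) + 2 * j = s + 2 * (2 ^ h + j) := by
          rw [pow_succ]; ring
        rw [hqe, he]

lemma exists_opt_draw (k : ℕ) :
    ∃ τ : BT (Fin (2 ^ (k + 1 + 1))) (k + 1 + 1),
      IsDraw τ ∧ OptShape (k + 1) τ := by
  have hN : 0 < 2 ^ (k + 1 + 1) := by positivity
  have hp2 : (2:ℕ) ^ (k + 1 + 1) = 2 ^ (k + 1) + 2 ^ (k + 1) := by
    rw [pow_succ]; omega
  have hpk : (2:ℕ) ^ (k + 1) = 2 ^ k + 2 ^ k := by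
    rw [pow_succ]; omega
  set gL : ℕ → Fin (2 ^ (k + 1 + 1)) :=
    fun x => ⟨x % 2 ^ (k + 1 + 1), Nat.mod_lt _ hN⟩ with hgLdef
  set gR : ℕ → Fin (2 ^ (k + 1 + 1)) := fun x =>
    ⟨(if x % 2 = 0 then 2 ^ (k + 1) + x / 2 else 2 ^ (k + 1) + 2 ^ k + x / 2)
      % 2 ^ (k + 1 + 1), Nat.mod_lt _ hN⟩ with hgRdef
  have hgL : ∀ x, x < 2 ^ (k + 1) → (gL x : ℕ) = x := by
    intro x hx
    show x % 2 ^ (k + 1 + 1) = x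
    apply Nat.mod_eq_of_lt
    omega
  have hgRe : ∀ x, x < 2 ^ (k + 1) → x % 2 = 0 →
      (gR x : ℕ) = 2 ^ (k + 1) + x / 2 := by
    intro x hx hpar
    show (if x % 2 = 0 then _ else _) % 2 ^ (k + 1 + 1) = _
    rw [if_pos hpar]
    apply Nat.mod_eq_of_lt
    omega
  have hgRo : ∀ x, x < 2 ^ (k + 1) → x % 2 = 1 →
      (gR x : ℕ) = 2 ^ (k + 1) + 2 ^ k + x / 2 := by
    intro x hx hpar
    show (if x % 2 = 0 then _ else _) % 2 ^ (k + 1 + 1) = _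
    rw [if_neg (by omega)]
    apply Nat.mod_eq_of_lt
    omega
  have hgRge : ∀ x, x < 2 ^ (k + 1) → 2 ^ (k + 1) ≤ (gR x : ℕ) := by
    intro x hx
    rcases Nat.mod_two_eq_zero_or_one x with h | h
    · rw [hgRe x hx h]; omega
    · rw [hgRo x hx h]; omega
  set L : BT (Fin (2 ^ (k + 1 + 1))) (k + 1) := (ordTree (k + 1) 0).map gL
    with hLdef
  set R : BT (Fin (2 ^ (k + 1 + 1))) (k + 1) := (ordTree (k + 1) 0).map gR
    with hRdef
  have hLl : L.leaves = (List.range' 0 (2 ^ (k + 1))).map gL := by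
    rw [hLdef, map_leaves, ordTree_leaves]
  have hRl : R.leaves = (List.range' 0 (2 ^ (k + 1))).map gR := by
    rw [hRdef, map_leaves, ordTree_leaves]
  have hndL : L.leaves.Nodup := by
    rw [hLl]
    refine List.Nodup.map_on ?_ List.nodup_range'
    intro x hx y hy hxy
    rw [List.mem_range'_1] at hx hy
    have h1 := hgL x (by omega)
    have h2 := hgL y (by omega)
    have := congrArg Fin.val hxy
    omega
  have hndR : R.leaves.Nodup := by
    rw [hRl]
    refine List.Nodup.map_on ?_ List.nodup_range'
    intro x hx y hy hxy
    rw [List.mem_range'_1] at hx hy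
    have hv := congrArg Fin.val hxy
    rcases Nat.mod_two_eq_zero_or_one x with h1 | h1 <;>
      rcases Nat.mod_two_eq_zero_or_one y with h2 | h2
    · rw [hgRe x (by omega) h1, hgRe y (by omega) h2] at hv; omega
    · rw [hgRe x (by omega) h1, hgRo y (by omega) h2] at hv; omega
    · rw [hgRo x (by omega) h1, hgRe y (by omega) h2] at hv; omega
    · rw [hgRo x (by omega) h1, hgRo y (by omega) h2] at hv; omega
  have hmemL : ∀ i : Fin (2 ^ (k + 1 + 1)), i ∈ L.leaves ↔ (i : ℕ) < 2 ^ (k + 1) := by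
    intro i
    rw [hLl]
    constructor
    · intro hi
      obtain ⟨x, hx, hxe⟩ := List.mem_map.mp hi
      rw [List.mem_range'_1] at hx
      rw [← hxe]
      rw [hgL x (by omega)]
      omega
    · intro hi
      refine List.mem_map.mpr ⟨(i : ℕ), ?_, ?_⟩
      · rw [List.mem_range'_1]; omega
      · apply Fin.ext; rw [hgL _ hi]
  have hmemR : ∀ i : Fin (2 ^ (k + 1 + 1)), i ∈ R.leaves ↔ 2 ^ (k + 1) ≤ (i : ℕ) := by
    intro i
    rw [hRl]
    constructor
    · intro hi
      obtain ⟨x, hx, hxe⟩ := List.mem_map.mp hi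
      rw [List.mem_range'_1] at hx
      rw [← hxe]
      exact hgRge x (by omega)
    · intro hi
      by_cases hc : (i : ℕ) < 2 ^ (k + 1) + 2 ^ k
      · refine List.mem_map.mpr ⟨2 * ((i : ℕ) - 2 ^ (k + 1)), ?_, ?_⟩
        · rw [List.mem_range'_1]; omega
        · apply Fin.ext
          rw [hgRe _ (by omega) (by omega)]
          omega
      · refine List.mem_map.mpr ⟨2 * ((i : ℕ) - 2 ^ (k + 1) - 2 ^ k) + 1, ?_, ?_⟩
        · rw [List.mem_range'_1]
          have := i.isLt
          omega
        · apply Fin.ext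
          rw [hgRo _ (by have := i.isLt; omega) (by omega)]
          have := i.isLt
          omega
  have hdraw : IsDraw (BT.node L R) := by
    intro i
    rw [show (BT.node L R).leaves = L.leaves ++ R.leaves from rfl,
      List.count_append]
    by_cases hi : (i : ℕ) < 2 ^ (k + 1)
    · rw [List.count_eq_one_of_mem hndL ((hmemL i).mpr hi),
        List.count_eq_zero_of_not_mem (fun h => by
          have := (hmemR i).mp h; omega)]
    · rw [List.count_eq_zero_of_not_mem (fun h => by
          have := (hmemL i).mp h; omega),
        List.count_eq_one_of_mem hndR ((hmemR i).mpr (by omega))]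
  refine ⟨BT.node L R, hdraw, L, R, rfl, Or.inl ⟨?_, ?_⟩⟩
  · apply list_multiset_eq _ _ hndL
    · intro x hx
      have hs := (hmemL x).mp hx
      rw [Finset.mem_insert]
      by_cases h0 : (x : ℕ) = 0
      · exact Or.inl (Fin.ext h0)
      · right
        rw [mem_smalls]
        omega
    · rw [hLl, List.length_map, List.length_range']
      exact card_smallish.symm
  · intro q hq
    obtain ⟨j, hj, hqe⟩ := firstPairs_ordTree_map gR k 0 q hq
    left
    rw [hqe]
    constructor
    · show gR (0 + 2 * j) ∈ mediums (k + 1)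
      rw [mem_mediums]
      rw [hgRe (0 + 2 * j) (by omega) (by omega)]
      constructor
      · omega
      · have : (0 + 2 * j) / 2 = j := by omega
        rw [this]
        show 2 ^ (k + 1) + j < 2 ^ (k + 1) + 2 ^ (k + 1 - 1)
        have : k + 1 - 1 = k := rfl
        rw [this]
        omega
    · show gR (0 + 2 * j + 1) ∈ bigs (k + 1)
      rw [mem_bigs]
      rw [hgRo (0 + 2 * j + 1) (by omega) (by omega)]
      show 2 ^ (k + 1) + 2 ^ (k + 1 - 1) ≤ 2 ^ (k + 1) + 2 ^ k + (0 + 2 * j + 1) / 2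
      have h1 : k + 1 - 1 = k := rfl
      rw [h1]
      omega

end SMB
namespace SMB

lemma wd_node_comm {N : ℕ} (P : Fin N → Fin N → ℝ) {m : ℕ}
    (L R : BT (Fin N) m) (i : Fin N) :
    wd P (BT.node L R) i = wd P (BT.node R L) i := by
  simp only [wd]; ring

lemma isDraw_comm {N m : ℕ} {L R : BT (Fin N) m}
    (h : IsDraw (BT.node L R)) : IsDraw (BT.node R L) := by
  intro i
  have := h i
  rw [show (BT.node L R).leaves = L.leaves ++ R.leaves from rfl,
    List.count_append] at this
  rw [show (BT.node R L).leaves = R.leaves ++ L.leaves from rfl,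
    List.count_append]
  omega

variable {k : ℕ} {ε : ℝ}
  {P : Fin (2 ^ (k + 1 + 1)) → Fin (2 ^ (k + 1 + 1)) → ℝ}

lemma wp_shape_value (hP : SMBMatrix (k + 1) ε P)
    (σ : BT (Fin (2 ^ (k + 1 + 1))) (k + 1 + 1)) (hdraw : IsDraw σ)
    (hshape : OptShape (k + 1) σ) :
    wd P σ (p0 (k + 1)) = 0.4 + 0.2 * mu ε k := by
  obtain ⟨L, R, rfl, hcase⟩ := hshape
  rcases hcase with ⟨hLm, hMB⟩ | ⟨hRm, hMB⟩
  · have hLm' : (L.leaves : Multiset (Fin (2 ^ (k + 1 + 1)))) =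
        (insert (p0 (k + 1)) (smalls (k + 1))).val := hLm
    obtain ⟨_, _, hmbR, _, _⟩ := half_facts (by omega) hdraw hLm'
    obtain ⟨_, ndR, _⟩ := nodup_node (isDraw_nodup hdraw)
    rw [wp_value_case1 hP (by omega) hdraw hLm',
      BBs_mixed hP R ndR hmbR hMB]
  · have hRm' : (R.leaves : Multiset (Fin (2 ^ (k + 1 + 1)))) =
        (insert (p0 (k + 1)) (smalls (k + 1))).val := hRm
    have hdraw' := isDraw_comm hdraw
    obtain ⟨_, _, hmbL, _, _⟩ := half_facts (by omega) hdraw' hRm'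
    obtain ⟨ndL, _, _⟩ := nodup_node (isDraw_nodup hdraw)
    rw [wd_node_comm, wp_value_case1 hP (by omega) hdraw' hRm',
      BBs_mixed hP L ndL hmbL hMB]

/-- A half containing player 0, which is not of the optimal form, does
strictly worse. -/
lemma half_lt (hP : SMBMatrix (k + 1) ε P) (he0 : 0 < ε) (heps : ε < eps0 k)
    {L R : BT (Fin (2 ^ (k + 1 + 1))) (k + 1)} (hdraw : IsDraw (BT.node L R))
    (hp0L : p0 (k + 1) ∈ L.leaves)
    (hns : ¬(((L.leaves : Multiset (Fin (2 ^ (k + 1 + 1)))) =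
        (insert (p0 (k + 1)) (smalls (k + 1))).val) ∧ MBPaired (k + 1) R)) :
    wd P (BT.node L R) (p0 (k + 1)) < 0.4 + 0.2 * mu ε k := by
  have he1 : ε ≤ 1 := le_of_lt (lt_of_lt_of_le heps (min_le_left _ _))
  have hmu0 := (mu_nonneg (le_of_lt he0) he1 (ε := ε) k).1
  obtain ⟨ndL, ndR, hdisj⟩ := nodup_node (isDraw_nodup hdraw)
  by_cases hall : ∀ j ∈ L.leaves, j = p0 (k + 1) ∨ j ∈ smalls (k + 1)
  · have hLm : (L.leaves : Multiset (Fin (2 ^ (k + 1 + 1)))) =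
        (insert (p0 (k + 1)) (smalls (k + 1))).val := by
      apply list_multiset_eq _ _ ndL
      · intro x hx
        rw [Finset.mem_insert]
        exact hall x hx
      · rw [leaves_length]
        exact card_smallish.symm
    have hMB : ¬MBPaired (k + 1) R := fun h => hns ⟨hLm, h⟩
    obtain ⟨_, _, hmbR, _, hRm⟩ := half_facts (by omega) hdraw hLm
    rw [wp_value_case1 hP (by omega) hdraw hLm]
    have hbad : BadT (k + 1) R := by
      unfold MBPaired at hMB
      push_neg at hMB
      obtain ⟨q, hq, hq2⟩ := hMB
      refine ⟨q, hq, ?_⟩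
      have hqmem := pairList_mem R.leaves q hq
      have h1 := hmbR q.1 hqmem.1
      have h2 := hmbR q.2 hqmem.2
      have hd1 : q.1 ∈ mediums (k + 1) → q.1 ∉ bigs (k + 1) :=
        fun hm hb => medium_ne_big hm hb rfl
      have hd2 : q.2 ∈ mediums (k + 1) → q.2 ∉ bigs (k + 1) :=
        fun hm hb => medium_ne_big hm hb rfl
      tauto
    have hlt := BBs_lt_mu hP R ndR hmbR (ff_half (by omega) hRm) hbad he0 heps
    linarith
  · push_neg at hall
    obtain ⟨j, hj, hjne⟩ := hall
    have hex : ∃ j ∈ L.leaves, j ∈ mediums (k + 1) ∨ j ∈ bigs (k + 1) := by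
      refine ⟨j, hj, ?_⟩
      rcases group_trichotomy j with h | h | h | h
      · exact absurd h hjne.1
      · exact absurd h hjne.2
      · exact Or.inl h
      · exact Or.inr h
    have := wp_case2 hP hdraw hp0L hex
    have h36 : (0.36 : ℝ) < 0.4 := by norm_num
    linarith

lemma wp_nonshape_lt (hP : SMBMatrix (k + 1) ε P) (he0 : 0 < ε)
    (heps : ε < eps0 k) (σ : BT (Fin (2 ^ (k + 1 + 1))) (k + 1 + 1))
    (hdraw : IsDraw σ) (hns : ¬OptShape (k + 1) σ) :
    wd P σ (p0 (k + 1)) < 0.4 + 0.2 * mu ε k := by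
  cases σ with
  | node L R =>
    have hp0 : p0 (k + 1) ∈ L.leaves ∨ p0 (k + 1) ∈ R.leaves := by
      have h1 := hdraw (p0 (k + 1))
      rw [show (BT.node L R).leaves = L.leaves ++ R.leaves from rfl,
        List.count_append] at h1
      by_contra hc
      push_neg at hc
      rw [List.count_eq_zero_of_not_mem hc.1,
        List.count_eq_zero_of_not_mem hc.2] at h1
      omega
    rcases hp0 with hp0L | hp0R
    · apply half_lt hP he0 heps hdraw hp0L
      intro hcon
      exact hns ⟨L, R, rfl, Or.inl hcon⟩
    · rw [wd_node_comm]
      apply half_lt hP he0 heps (isDraw_comm hdraw) hp0R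
      intro hcon
      exact hns ⟨L, R, rfl, Or.inr hcon⟩

end SMB
/-- for `n ≥ 2` there is `ε₀ > 0` such that for all `ε ∈ (0, ε₀)` and
every small/medium/big comparison matrix `P` with parameter `ε`, a draw maximizes
the winning probability of player 1 iff it has the shape `OptShape`. -/
theorem smb_optimal_draws (n : ℕ) (hn : 2 ≤ n) :
    ∃ ε₀ : ℝ, 0 < ε₀ ∧ ∀ ε ∈ Set.Ioo (0 : ℝ) ε₀,
      ∀ P : Fin (2 ^ (n + 1)) → Fin (2 ^ (n + 1)) → ℝ, SMBMatrix n ε P →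
        ∀ σ : BT (Fin (2 ^ (n + 1))) (n + 1), IsDraw σ →
          ((∀ τ : BT (Fin (2 ^ (n + 1))) (n + 1), IsDraw τ →
              wd P τ ⟨0, by positivity⟩ ≤ wd P σ ⟨0, by positivity⟩) ↔
            OptShape n σ) := by
  obtain ⟨k, rfl⟩ : ∃ k, n = k + 1 := ⟨n - 1, by omega⟩
  refine ⟨SMB.eps0 k, SMB.eps0_pos k, ?_⟩
  rintro ε ⟨he0, heps⟩ P hP σ hσ
  constructor
  · intro hmax
    by_contra hns
    obtain ⟨τ, hτd, hτs⟩ := SMB.exists_opt_draw k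
    have h1 : wd P τ (SMB.p0 (k + 1)) ≤ wd P σ (SMB.p0 (k + 1)) := hmax τ hτd
    have h2 := SMB.wp_shape_value hP τ hτd hτs
    have h3 := SMB.wp_nonshape_lt hP he0 heps σ hσ hns
    rw [h2] at h1
    linarith
  · intro hshape τ hτd
    have h2 := SMB.wp_shape_value hP σ hσ hshape
    show wd P τ (SMB.p0 (k + 1)) ≤ wd P σ (SMB.p0 (k + 1))
    by_cases hτs : OptShape (k + 1) τ
    · rw [SMB.wp_shape_value hP τ hτd hτs, h2]
    · have h3 := SMB.wp_nonshape_lt hP he0 heps τ hτd hτs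
      rw [h2]
      linarith
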